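/- arXiv:0902.0152 — 2 statements merged into one kernel-verified Lean document; each statement's English description precedes it below -/
import Mathlib

section
/- Let Λ be a dominant weight and let W_P be the subgroup of W generated by the simple reflections s_γ with ⟨Λ, γ^∨⟩ = 0. If w ∈ W is Λ-minuscule or Λ-cominuscule, then w is a minimal length coset representative of w·W_P, i.e. w ∈ W^P; equivalently, ℓ(w s_γ) = ℓ(w) + 1 for every simple root γ with ⟨Λ, γ^∨⟩ = 0. -/
namespace KM

/-! ## Jeu de taquin on posets (parametrized by an order relation `r`) -/

namespace JDT

variable {P : Type}

/-- `S` is a lower set (order ideal) for the relation `r`. -/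
def IsIdeal (r : P → P → Prop) (S : Set P) : Prop :=
  ∀ ⦃x y : P⦄, r x y → y ∈ S → x ∈ S

/-- `y` covers `x` for the order relation `r`. -/
def Cov (r : P → P → Prop) (x y : P) : Prop :=
  r x y ∧ x ≠ y ∧ ∀ z : P, r x z → r z y → z = x ∨ z = y

/-- A standard tableau for the order relation `r`: a finite set of boxes, labelled
strictly increasingly (w.r.t. `r`) and bijectively by `{1, …, n}`. -/
structure Tab (r : P → P → Prop) where
  dom : Set P
  finite : dom.Finite
  lab : P → ℕ
  mono : ∀ ⦃x y : P⦄, x ∈ dom → y ∈ dom → r x y → x ≠ y → lab x < lab y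
  bij : Set.BijOn lab dom (Set.Icc 1 dom.ncard)

/-- A configuration occurring during a jeu de taquin slide: a set of labelled boxes,
the labelling, and the position of the vacant box. -/
structure Cfg (P : Type) where
  dom : Set P
  lab : P → ℕ
  hole : P

/-- One elementary move inside a jeu de taquin slide: among the labelled boxes covering
the vacant box, the one with the smallest label moves its label into the vacant box,
becoming itself vacant. -/
def InnerStep (r : P → P → Prop) (s t : Cfg P) : Prop :=
  t.hole ∈ s.dom ∧ Cov r s.hole t.hole ∧
  (∀ z ∈ s.dom, Cov r s.hole z → s.lab t.hole ≤ s.lab z) ∧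
  t.dom = insert s.hole (s.dom \ {t.hole}) ∧
  t.lab s.hole = s.lab t.hole ∧ (∀ z : P, z ≠ s.hole → t.lab z = s.lab z)

/-- No labelled box covers the vacant box: the slide stops. -/
def Terminal (r : P → P → Prop) (s : Cfg P) : Prop :=
  ∀ z ∈ s.dom, ¬ Cov r s.hole z

/-- `x` is a valid vacant box to slide into: it lies strictly below some labelled box,
and is maximal among the unlabelled boxes lying strictly below some labelled box. -/
def IsSlideBox (r : P → P → Prop) (D : Set P) (x : P) : Prop :=
  x ∉ D ∧ (∃ d ∈ D, r x d ∧ x ≠ d) ∧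
  ∀ y : P, y ∉ D → (∃ d ∈ D, r y d ∧ y ≠ d) → r x y → x = y

/-- The jeu de taquin slide `j_x` : relation between the labelled configurations
before and after one full slide. -/
def SlideRel (r : P → P → Prop) (A B : Set P × (P → ℕ)) : Prop :=
  ∃ x : P, IsSlideBox r A.1 x ∧
    ∃ e : Cfg P, Relation.ReflTransGen (InnerStep r) ⟨A.1, A.2, x⟩ e ∧
      Terminal r e ∧ B.1 = e.dom ∧ B.2 = e.lab

/-- `R` is a rectification of `T`: it is obtained from `T` by iterating jeu de taquin
slides, and its shape is an order ideal. -/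
def RectifiesTo (r : P → P → Prop) (T R : Tab r) : Prop :=
  Relation.ReflTransGen (SlideRel r) (T.dom, T.lab) (R.dom, R.lab) ∧ IsIdeal r R.dom

/-- The poset has the jeu de taquin property: the rectification of any standard tableau
is independent of all choices made while performing the slides. -/
def HasJdt (r : P → P → Prop) : Prop :=
  ∀ T R R' : Tab r, RectifiesTo r T R → RectifiesTo r T R' → R.dom = R'.dom ∧ R.lab = R'.lab

open scoped Classical in
/-- The jeu de taquin number `t_{λ,μ}^ν`, relative to a choice `U` of a standard tableau
of each straight shape: the number of standard tableaux of skew shape `ν/λ` whose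
rectification is `U μ`; it is `0` if `λ ⊄ ν`. -/
noncomputable def tP (r : P → P → Prop) (U : Set P → Tab r) (lam mu nu : Set P) : ℕ :=
  if lam ⊆ nu then
    Set.ncard {T : Tab r | T.dom = nu \ lam ∧ RectifiesTo r T (U mu)}
  else 0

end JDT

/-! ## Symmetrizable generalized Cartan matrices and their Weyl groups -/

/-- A symmetrizable generalized Cartan matrix `a i j = ⟨α_j, α_i^∨⟩`, together with a
symmetrizer `d` (so that `(α_i, α_j) = d i * a i j` is a symmetric bilinear form with
`(α_i, α_i) = 2 * d i`). -/
structure SGCM (I : Type) where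
  a : I → I → ℤ
  d : I → ℝ
  a_diag : ∀ i, a i i = 2
  a_offdiag : ∀ i j, i ≠ j → a i j ≤ 0
  a_zero_iff : ∀ i j, a i j = 0 → a j i = 0
  d_pos : ∀ i, 0 < d i
  symm : ∀ i j, d i * (a i j : ℝ) = d j * (a j i : ℝ)

variable {I : Type}

/-- The squared length `(α_i, α_i)` of the `i`-th simple root. -/
def SGCM.normSq (G : SGCM I) (i : I) : ℝ := 2 * G.d i

/-- The dual (transposed) generalized Cartan matrix, corresponding to exchanging
roots and coroots. -/
noncomputable def SGCM.dual (G : SGCM I) : SGCM I where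
  a i j := G.a j i
  d i := (G.d i)⁻¹
  a_diag i := G.a_diag i
  a_offdiag i j h := G.a_offdiag j i (Ne.symm h)
  a_zero_iff i j h := G.a_zero_iff j i h
  d_pos i := inv_pos.mpr (G.d_pos i)
  symm i j := by
    have h := G.symm j i
    have hi : G.d i ≠ 0 := ne_of_gt (G.d_pos i)
    have hj : G.d j ≠ 0 := ne_of_gt (G.d_pos j)
    rw [inv_mul_eq_div, inv_mul_eq_div, div_eq_div_iff hi hj]
    linear_combination h

/-- The simple reflection `s_i` acting on weight coordinates: a weight `λ` is recorded
by its pairings `λ j = ⟨λ, α_j^∨⟩` with the simple coroots, and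
`⟨s_i λ, α_j^∨⟩ = ⟨λ, α_j^∨⟩ - ⟨λ, α_i^∨⟩ ⟨α_i, α_j^∨⟩`. -/
def SGCM.srefl (G : SGCM I) (i : I) : Equiv.Perm (I → ℝ) :=
  Function.Involutive.toPerm (fun lam j => lam j - lam i * (G.a j i : ℝ)) (by
    intro lam
    funext j
    have h2 : ((G.a i i : ℤ) : ℝ) = 2 := by rw [G.a_diag i]; norm_num
    dsimp only
    rw [h2]
    ring)

/-- The product `s_{l 1} ⋯ s_{l n}` of the simple reflections along a word. -/
def SGCM.wordProd (G : SGCM I) (l : List I) : Equiv.Perm (I → ℝ) :=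
  (l.map G.srefl).prod

/-- The length of an element of the Weyl group: the minimal length of a word of simple
reflections expressing it. -/
noncomputable def SGCM.length (G : SGCM I) (w : Equiv.Perm (I → ℝ)) : ℕ :=
  sInf {n | ∃ l : List I, l.length = n ∧ G.wordProd l = w}

/-- A word is reduced if no shorter word has the same product. -/
def SGCM.IsReduced (G : SGCM I) (l : List I) : Prop :=
  G.length (G.wordProd l) = l.length

/-- `w` belongs to the Weyl group (is a product of simple reflections). -/
def SGCM.InW (G : SGCM I) (w : Equiv.Perm (I → ℝ)) : Prop :=
  ∃ l : List I, G.wordProd l = w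

/-- The (strong) Bruhat order on the Weyl group, via the subword property. -/
def SGCM.bruhatLE (G : SGCM I) (u w : Equiv.Perm (I → ℝ)) : Prop :=
  ∃ l : List I, G.IsReduced l ∧ G.wordProd l = w ∧
    ∃ l' : List I, l'.Sublist l ∧ G.wordProd l' = u

/-- Peterson's condition: the word `[β_1, …, β_l]` satisfies
`s_{β_k} s_{β_{k+1}} ⋯ s_{β_l} (Λ) = s_{β_{k+1}} ⋯ s_{β_l} (Λ) - β_k`, i.e.
`⟨s_{β_{k+1}} ⋯ s_{β_l} (Λ), β_k^∨⟩ = 1`, for every `k`. -/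
def SGCM.MinusculeWord (G : SGCM I) (Λ : I → ℝ) : List I → Prop
  | [] => True
  | j :: l => G.MinusculeWord Λ l ∧ G.wordProd l Λ j = 1

/-- `w` is `Λ`-minuscule. -/
def SGCM.IsMinuscule (G : SGCM I) (Λ : I → ℝ) (w : Equiv.Perm (I → ℝ)) : Prop :=
  ∃ l : List I, G.IsReduced l ∧ G.wordProd l = w ∧ G.MinusculeWord Λ l

/-- `w` is `Λ`-cominuscule: it is `Λ^∨`-minuscule for the dual root system (where the
coweight `Λ^∨ = Σ Λ_i ϖ_i^∨` has the same coordinate function as `Λ`). -/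
def SGCM.IsCominuscule (G : SGCM I) (Λ : I → ℝ) (w : Equiv.Perm (I → ℝ)) : Prop :=
  ∃ l : List I, G.IsReduced l ∧ G.wordProd l = w ∧ G.dual.MinusculeWord Λ l

/-- `w` is `Λ`-minuscule or `Λ`-cominuscule. -/
def SGCM.IsCoMin (G : SGCM I) (Λ : I → ℝ) (w : Equiv.Perm (I → ℝ)) : Prop :=
  G.IsMinuscule Λ w ∨ G.IsCominuscule Λ w

/-- The simple reflection `s_i` acting on the root lattice `⊕ ℤ α_j` (an element is
recorded by its coordinates on the simple roots):
`s_i (x) = x - ⟨x, α_i^∨⟩ α_i` with `⟨Σ c_j α_j, α_i^∨⟩ = Σ c_j * a i j`. -/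
noncomputable def SGCM.qrefl (G : SGCM I) (i : I) : Equiv.Perm (I →₀ ℤ) :=
  Function.Involutive.toPerm
    (fun x => x - Finsupp.single i (x.sum fun j c => c * G.a i j))
    (by
      intro x
      dsimp only
      have hsub : ∀ y z : I →₀ ℤ,
          ((y - z).sum fun j c => c * G.a i j)
            = (y.sum fun j c => c * G.a i j) - (z.sum fun j c => c * G.a i j) :=
        fun y z => Finsupp.sum_sub_index (fun a b₁ b₂ => by ring)
      have hsingle : ∀ c : ℤ,
          ((Finsupp.single i c).sum fun j c' => c' * G.a i j) = c * 2 := by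
        intro c
        rw [Finsupp.sum_single_index (by ring), G.a_diag i]
      rw [hsub, hsingle]
      have h : (x.sum fun j c => c * G.a i j) - (x.sum fun j c => c * G.a i j) * 2
          = -(x.sum fun j c => c * G.a i j) := by ring
      rw [h, Finsupp.single_neg]
      abel)

/-- The product of the simple reflections along a word, acting on the root lattice. -/
noncomputable def SGCM.qword (G : SGCM I) (l : List I) : Equiv.Perm (I →₀ ℤ) :=
  (l.map G.qrefl).prod

/-! ## Heaps of fully commutative elements -/

/-- Generating relation for the heap order on the positions of a word: position `p` is
below position `q` when `p` comes later in the word and the corresponding simple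
reflections do not commute. -/
def heapBelow (G : SGCM I) (l : List I) (p q : Fin l.length) : Prop :=
  q.1 < p.1 ∧ G.srefl (l.get p) * G.srefl (l.get q) ≠ G.srefl (l.get q) * G.srefl (l.get p)

/-- The heap order on the positions of a word. -/
def heapLE (G : SGCM I) (l : List I) : Fin l.length → Fin l.length → Prop :=
  Relation.ReflTransGen (heapBelow G l)

/-- The subword of `l` consisting of the positions in `S`, in the order of the word. -/
noncomputable def idealWord (l : List I) (S : Set (Fin l.length)) : List I :=
  ((List.finRange l.length).filter fun p => @decide (p ∈ S) (Classical.propDecidable _)).map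
    l.get

open scoped Classical in
/-- The number `m(w)` attached to a `Λ`-(co)minuscule element with reduced word `l`:
the product of `(α, α) / (α_p, α_p)` over all pairs `(p, α)` where `p` is a position of
the word, `α` is a simple root with `⟨Λ, α^∨⟩ > 0` and `(α, α) > (α_p, α_p)`, and `p`
lies above the minimal `α`-coloured element `(α, 1)` of the heap (here `q` runs over the
positions and the first condition states that `q = (α, 1)` for `α` the colour of `q`). -/
noncomputable def mNum (G : SGCM I) (Λ : I → ℝ) (l : List I) : ℝ :=
  ∏ pq : Fin l.length × Fin l.length,
    if (∀ r, l.get r = l.get pq.2 → heapLE G l pq.2 r) ∧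
        0 < Λ (l.get pq.2) ∧
        G.normSq (l.get pq.1) < G.normSq (l.get pq.2) ∧
        heapLE G l pq.2 pq.1
    then G.normSq (l.get pq.2) / G.normSq (l.get pq.1)
    else 1

/-! ## Jeu de taquin numbers for (co)minuscule elements -/

/-- A valid system of choices for computing jeu de taquin numbers of `Λ`-(co)minuscule
elements: `wrd w` is a reduced word for `w`; for `u ≤ w`, `idl w u` is the order ideal
of the heap of `w` corresponding to `u`, and `tab w u` is a standard tableau whose shape
is that ideal. -/
def ValidChoices (G : SGCM I) (Λ : I → ℝ)
    (wrd : Equiv.Perm (I → ℝ) → List I)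
    (idl : (w u : Equiv.Perm (I → ℝ)) → Set (Fin (wrd w).length))
    (tab : (w u : Equiv.Perm (I → ℝ)) → JDT.Tab (heapLE G (wrd w))) : Prop :=
  (∀ w, G.IsCoMin Λ w → G.IsReduced (wrd w) ∧ G.wordProd (wrd w) = w) ∧
  (∀ w u, G.IsCoMin Λ w → G.bruhatLE u w →
      JDT.IsIdeal (heapLE G (wrd w)) (idl w u) ∧
      G.wordProd (idealWord (wrd w) (idl w u)) = u) ∧
  (∀ w u, G.IsCoMin Λ w → G.bruhatLE u w → (tab w u).dom = idl w u)

open scoped Classical in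
/-- The jeu de taquin number `t_{u,v}^w` of three Weyl group elements, computed in the
heap of `w`: the number of standard tableaux of shape `H(w)/λ(u)` rectifying to the
chosen standard tableau of shape `λ(v)`; it is `0` unless `u ≤ w` and `v ≤ w`. -/
noncomputable def tE (G : SGCM I)
    (wrd : Equiv.Perm (I → ℝ) → List I)
    (idl : (w u : Equiv.Perm (I → ℝ)) → Set (Fin (wrd w).length))
    (tab : (w u : Equiv.Perm (I → ℝ)) → JDT.Tab (heapLE G (wrd w)))
    (u v w : Equiv.Perm (I → ℝ)) : ℕ :=
  if G.bruhatLE u w ∧ G.bruhatLE v w then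
    Set.ncard {T : JDT.Tab (heapLE G (wrd w)) |
      T.dom = Set.univ \ idl w u ∧ JDT.RectifiesTo (heapLE G (wrd w)) T (tab w v)}
  else 0

/-- The number `m_{u,v}^w = m(w) / (m(u) · m(v))`. -/
noncomputable def mQuot (G : SGCM I) (Λ : I → ℝ)
    (wrd : Equiv.Perm (I → ℝ) → List I)
    (u v w : Equiv.Perm (I → ℝ)) : ℝ :=
  mNum G Λ (wrd w) / (mNum G Λ (wrd u) * mNum G Λ (wrd v))

/-- The set `S(x)` of simple roots `α` such that `⟨x(Λ), α^∨⟩ ≥ 0`. -/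
def Sx (G : SGCM I) (Λ : I → ℝ) (x : Equiv.Perm (I → ℝ)) : Set I :=
  {α : I | 0 ≤ x Λ α}

/-- The restriction of a symmetrizable GCM to a subset of the index set. -/
def SGCM.restrict (G : SGCM I) (S : Set I) : SGCM ↥S where
  a i j := G.a i.1 j.1
  d i := G.d i.1
  a_diag i := G.a_diag i.1
  a_offdiag i j h := G.a_offdiag i.1 j.1 (fun hv => h (Subtype.ext hv))
  a_zero_iff i j h := G.a_zero_iff i.1 j.1 h
  d_pos i := G.d_pos i.1
  symm i j := G.symm i.1 j.1

end KM

namespace KM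
namespace S2

noncomputable section

variable {I : Type}

/-- Real entries of the Cartan matrix. -/
def Ar (G : SGCM I) (i j : I) : ℝ := (G.a i j : ℝ)

lemma Ar_diag (G : SGCM I) (i : I) : Ar G i i = 2 := by
  rw [Ar, G.a_diag]; norm_num

/-- basis vector of the (co)root lattice -/
def eps (i : I) : I →₀ ℝ := Finsupp.single i 1

/-- pairing of a coefficient function with a finitely supported vector -/
def PP (f : I → ℝ) (x : I →₀ ℝ) : ℝ := x.sum fun t c => c * f t

lemma PP_single (f : I → ℝ) (j : I) (r : ℝ) : PP f (Finsupp.single j r) = r * f j :=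
  Finsupp.sum_single_index (zero_mul _)

lemma PP_eps (f : I → ℝ) (j : I) : PP f (eps j) = f j := by
  rw [eps, PP_single, one_mul]

lemma PP_sub (f : I → ℝ) (x y : I →₀ ℝ) : PP f (x - y) = PP f x - PP f y :=
  Finsupp.sum_sub_index (fun _ _ _ => sub_mul _ _ _)

lemma PP_add (f : I → ℝ) (x y : I →₀ ℝ) : PP f (x + y) = PP f x + PP f y :=
  Finsupp.sum_add_index' (fun _ => zero_mul _) (fun _ _ _ => add_mul _ _ _)

lemma PP_smul (f : I → ℝ) (r : ℝ) (x : I →₀ ℝ) : PP f (r • x) = r * PP f x := by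
  induction x using Finsupp.induction_linear with
  | zero => simp [PP]
  | add x y hx hy => rw [smul_add, PP_add, PP_add, hx, hy]; ring
  | single j c => rw [Finsupp.smul_single, PP_single, PP_single, smul_eq_mul]; ring

lemma PP_nonneg {f : I → ℝ} {x : I →₀ ℝ} (hf : ∀ j, 0 ≤ f j) (hx : ∀ j, 0 ≤ x j) :
    0 ≤ PP f x :=
  Finset.sum_nonneg fun t _ => mul_nonneg (hx t) (hf t)

lemma PP_nonpos {f : I → ℝ} {x : I →₀ ℝ} (hf : ∀ j, 0 ≤ f j) (hx : ∀ j, x j ≤ 0) :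
    PP f x ≤ 0 :=
  Finset.sum_nonpos fun t _ => mul_nonpos_of_nonpos_of_nonneg (hx t) (hf t)

lemma tau_invol (G : SGCM I) (i : I) :
    Function.Involutive (fun x : I →₀ ℝ => x - PP (fun t => Ar G t i) x • eps i) := by
  intro x
  dsimp only
  rw [PP_sub, PP_smul, PP_eps, Ar_diag]
  module

/-- simple reflection acting on the (co)root lattice -/
def tau (G : SGCM I) (i : I) : Equiv.Perm (I →₀ ℝ) :=
  Function.Involutive.toPerm _ (tau_invol G i)

lemma tau_apply (G : SGCM I) (i : I) (x : I →₀ ℝ) :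
    tau G i x = x - PP (fun t => Ar G t i) x • eps i := rfl

lemma tau_linear (G : SGCM I) (i : I) (a b : ℝ) (x y : I →₀ ℝ) :
    tau G i (a • x + b • y) = a • tau G i x + b • tau G i y := by
  rw [tau_apply, tau_apply, tau_apply, PP_add, PP_smul, PP_smul]
  module

lemma tau_eps_self (G : SGCM I) (i : I) : tau G i (eps i) = -eps i := by
  rw [tau_apply, PP_eps, Ar_diag]
  module

/-- product of simple reflections along a word, on the (co)root lattice -/
def twrd (G : SGCM I) (l : List I) : Equiv.Perm (I →₀ ℝ) := (l.map (tau G)).prod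

lemma twrd_nil (G : SGCM I) : twrd G [] = 1 := rfl

lemma twrd_cons (G : SGCM I) (i : I) (l : List I) :
    twrd G (i :: l) = tau G i * twrd G l := by
  simp [twrd]

lemma twrd_singleton (G : SGCM I) (i : I) : twrd G [i] = tau G i := by
  simp [twrd]

lemma twrd_append (G : SGCM I) (l m : List I) :
    twrd G (l ++ m) = twrd G l * twrd G m := by
  simp [twrd]

lemma twrd_linear (G : SGCM I) (l : List I) (a b : ℝ) (x y : I →₀ ℝ) :
    twrd G l (a • x + b • y) = a • twrd G l x + b • twrd G l y := by
  induction l with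
  | nil => rfl
  | cons i l ih =>
      simp only [twrd_cons, Equiv.Perm.mul_apply]
      rw [ih, tau_linear]

/-- word product lemmas for the weight action -/
lemma wp_nil (G : SGCM I) : G.wordProd [] = 1 := rfl

lemma wp_cons (G : SGCM I) (i : I) (l : List I) :
    G.wordProd (i :: l) = G.srefl i * G.wordProd l := by
  simp [SGCM.wordProd]

lemma wp_append (G : SGCM I) (l m : List I) :
    G.wordProd (l ++ m) = G.wordProd l * G.wordProd m := by
  simp [SGCM.wordProd]

lemma srefl_apply (G : SGCM I) (i : I) (lam : I → ℝ) (j : I) :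
    G.srefl i lam j = lam j - lam i * Ar G j i := rfl

lemma srefl_invol (G : SGCM I) (i : I) (lam : I → ℝ) :
    G.srefl i (G.srefl i lam) = lam := by
  funext j
  simp only [srefl_apply]
  rw [Ar_diag]
  ring

lemma srefl_sq (G : SGCM I) (i : I) : G.srefl i * G.srefl i = 1 :=
  Equiv.ext fun lam => srefl_invol G i lam

/-- adjointness of the two actions -/
lemma adj1 (G : SGCM I) (i : I) (lam : I → ℝ) (x : I →₀ ℝ) :
    PP (G.srefl i lam) x = PP lam (tau G i x) := by
  rw [tau_apply, PP_sub, PP_smul, PP_eps]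
  unfold PP
  rw [show (fun (t : I) (c : ℝ) => c * G.srefl i lam t)
      = fun t c => c * lam t - (c * Ar G t i) * lam i from
    funext fun t => funext fun c => by rw [srefl_apply]; ring]
  rw [Finsupp.sum_sub, ← Finsupp.sum_mul]

lemma adj (G : SGCM I) (l : List I) (lam : I → ℝ) (x : I →₀ ℝ) :
    PP (G.wordProd l lam) x = PP lam (twrd G l.reverse x) := by
  induction l generalizing x with
  | nil => rfl
  | cons i l ih =>
      rw [wp_cons, Equiv.Perm.mul_apply, adj1, ih, List.reverse_cons, twrd_append,
        Equiv.Perm.mul_apply, twrd_singleton]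

lemma tau_sq (G : SGCM I) (i : I) : tau G i * tau G i = 1 :=
  Equiv.ext fun x => tau_invol G i x

/-- the Coxeter exponent attached to a pair of Cartan integers -/
def mval (k : ℤ) : ℕ :=
  if k = 0 then 2 else if k = 1 then 3 else if k = 2 then 4 else if k = 3 then 6 else 0

open scoped Classical in
/-- the Coxeter matrix of a symmetrizable GCM -/
def cm (G : SGCM I) : CoxeterMatrix I where
  M := Matrix.of fun i j => if i = j then 1 else mval (G.a i j * G.a j i)
  isSymm := by
    ext i j
    by_cases h : i = j
    · simp [h]
    · simp [h, Ne.symm h, mul_comm]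
  diagonal i := by simp
  off_diagonal i j h := by
    simp only [Matrix.of_apply, if_neg h, mval]
    split_ifs <;> norm_num

open scoped Classical in
lemma cm_apply (G : SGCM I) (i j : I) :
    (cm G) i j = if i = j then 1 else mval (G.a i j * G.a j i) := rfl

lemma pair_comp (G : SGCM I) (i j : I) (x : I →₀ ℝ) (P Q : ℝ) :
    tau G i (tau G j (x - P • eps i - Q • eps j))
      = x - (PP (fun t => Ar G t i) x - P
            - Ar G j i * (PP (fun t => Ar G t j) x - Ar G i j * P - Q)) • eps i
          - (PP (fun t => Ar G t j) x - Ar G i j * P - Q) • eps j := by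
  rw [tau_apply, tau_apply]
  simp only [PP_sub, PP_smul, PP_eps, Ar_diag]
  module

lemma rel_swap {Vt : Type} {σ τ : Equiv.Perm Vt} {m : ℕ} (h : (σ * τ) ^ m = 1) :
    (τ * σ) ^ m = 1 := by
  have e : ∀ n : ℕ, (τ * σ) ^ n = τ * (σ * τ) ^ n * τ⁻¹ := by
    intro n
    induction n with
    | zero => simp
    | succ n ih => rw [pow_succ, pow_succ, ih]; group
  rw [e m, h]
  simp

lemma rel2 (G : SGCM I) (i j : I) (hu : G.a i j = 0) (hv : G.a j i = 0) :
    (tau G i * tau G j) ^ 2 = 1 := by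
  have hu' : Ar G i j = 0 := by rw [Ar, hu]; norm_num
  have hv' : Ar G j i = 0 := by rw [Ar, hv]; norm_num
  apply Equiv.ext; intro x
  have hx0 : x = x - (0:ℝ) • eps i - (0:ℝ) • eps j := by simp
  show (tau G i * tau G j) ((tau G i * tau G j) x) = x
  simp only [Equiv.Perm.mul_apply]
  nth_rewrite 1 [hx0]
  rw [pair_comp, pair_comp, hu', hv']
  module

lemma rel3 (G : SGCM I) (i j : I) (hu : G.a i j = -1) (hv : G.a j i = -1) :
    (tau G i * tau G j) ^ 3 = 1 := by
  have hu' : Ar G i j = -1 := by rw [Ar, hu]; norm_num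
  have hv' : Ar G j i = -1 := by rw [Ar, hv]; norm_num
  apply Equiv.ext; intro x
  have hx0 : x = x - (0:ℝ) • eps i - (0:ℝ) • eps j := by simp
  show (tau G i * tau G j) ((tau G i * tau G j) ((tau G i * tau G j) x)) = x
  simp only [Equiv.Perm.mul_apply]
  nth_rewrite 1 [hx0]
  rw [pair_comp, pair_comp, pair_comp, hu', hv']
  module

lemma rel4 (G : SGCM I) (i j : I) (hu : G.a i j = -1) (hv : G.a j i = -2) :
    (tau G i * tau G j) ^ 4 = 1 := by
  have hu' : Ar G i j = -1 := by rw [Ar, hu]; norm_num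
  have hv' : Ar G j i = -2 := by rw [Ar, hv]; norm_num
  apply Equiv.ext; intro x
  have hx0 : x = x - (0:ℝ) • eps i - (0:ℝ) • eps j := by simp
  show (tau G i * tau G j) ((tau G i * tau G j) ((tau G i * tau G j)
      ((tau G i * tau G j) x))) = x
  simp only [Equiv.Perm.mul_apply]
  nth_rewrite 1 [hx0]
  rw [pair_comp, pair_comp, pair_comp, pair_comp, hu', hv']
  module

lemma rel6 (G : SGCM I) (i j : I) (hu : G.a i j = -1) (hv : G.a j i = -3) :
    (tau G i * tau G j) ^ 6 = 1 := by
  have hu' : Ar G i j = -1 := by rw [Ar, hu]; norm_num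
  have hv' : Ar G j i = -3 := by rw [Ar, hv]; norm_num
  apply Equiv.ext; intro x
  have hx0 : x = x - (0:ℝ) • eps i - (0:ℝ) • eps j := by simp
  show (tau G i * tau G j) ((tau G i * tau G j) ((tau G i * tau G j)
      ((tau G i * tau G j) ((tau G i * tau G j) ((tau G i * tau G j) x))))) = x
  simp only [Equiv.Perm.mul_apply]
  nth_rewrite 1 [hx0]
  rw [pair_comp, pair_comp, pair_comp, pair_comp, pair_comp, pair_comp, hu', hv']
  module

/-- possible values of a pair of off-diagonal Cartan integers with given product -/
lemma offdiag_cases (G : SGCM I) (i j : I) (hij : i ≠ j) {k : ℤ} (hk : 1 ≤ k) (hk3 : k ≤ 3)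
    (h : G.a i j * G.a j i = k) :
    (G.a i j = -1 ∧ G.a j i = -k) ∨ (G.a i j = -k ∧ G.a j i = -1) := by
  have h1 : G.a i j ≤ 0 := G.a_offdiag i j hij
  have h2 : G.a j i ≤ 0 := G.a_offdiag j i (Ne.symm hij)
  set u := -G.a i j with hu
  set v := -G.a j i with hv
  have huv : u * v = k := by rw [hu, hv]; linarith [h, neg_mul_neg (G.a i j) (G.a j i)]
  have hu0 : 0 ≤ u := by omega
  have hv0 : 0 ≤ v := by omega
  have hv1 : 1 ≤ v := by
    rcases eq_or_lt_of_le hv0 with h' | h'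
    · exfalso; rw [← h', mul_zero] at huv; omega
    · omega
  have hu1 : 1 ≤ u := by
    rcases eq_or_lt_of_le hu0 with h' | h'
    · exfalso; rw [← h', zero_mul] at huv; omega
    · omega
  have hor : u = 1 ∨ v = 1 := by
    by_contra hc
    push_neg at hc
    have hu2 : 2 ≤ u := by omega
    have hv2 : 2 ≤ v := by omega
    nlinarith
  rcases hor with h' | h'
  · left
    rw [h', one_mul] at huv
    omega
  · right
    rw [h', mul_one] at huv
    omega

lemma liftable (G : SGCM I) : (cm G).IsLiftable (fun i => tau G i) := by
  intro i j
  by_cases hij : i = j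
  · subst hij
    rw [cm_apply, if_pos rfl, pow_one]
    exact tau_sq G i
  · rw [cm_apply, if_neg hij]
    set k := G.a i j * G.a j i with hk
    have hknn : 0 ≤ k := by
      have h1 : G.a i j ≤ 0 := G.a_offdiag i j hij
      have h2 : G.a j i ≤ 0 := G.a_offdiag j i (Ne.symm hij)
      nlinarith
    by_cases h0 : k = 0
    · have hij0 : G.a i j = 0 ∨ G.a j i = 0 := mul_eq_zero.mp (hk ▸ h0)
      have hboth : G.a i j = 0 ∧ G.a j i = 0 := by
        rcases hij0 with h | h
        · exact ⟨h, G.a_zero_iff i j h⟩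
        · exact ⟨G.a_zero_iff j i h, h⟩
      rw [show mval k = 2 from by rw [mval, if_pos h0]]
      exact rel2 G i j hboth.1 hboth.2
    by_cases h1 : k = 1
    · rw [show mval k = 3 from by rw [mval, if_neg h0, if_pos h1]]
      rcases offdiag_cases G i j hij (k := 1) (by omega) (by omega) (by omega) with ⟨ha, hb⟩ | ⟨ha, hb⟩
      · exact rel3 G i j ha hb
      · exact rel3 G i j ha hb
    by_cases h2 : k = 2
    · rw [show mval k = 4 from by rw [mval, if_neg h0, if_neg h1, if_pos h2]]
      rcases offdiag_cases G i j hij (k := 2) (by omega) (by omega) (by omega) with ⟨ha, hb⟩ | ⟨ha, hb⟩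
      · exact rel4 G i j ha hb
      · exact rel_swap (rel4 G j i hb ha)
    by_cases h3 : k = 3
    · rw [show mval k = 6 from by rw [mval, if_neg h0, if_neg h1, if_neg h2, if_pos h3]]
      rcases offdiag_cases G i j hij (k := 3) (by omega) (by omega) (by omega) with ⟨ha, hb⟩ | ⟨ha, hb⟩
      · exact rel6 G i j ha hb
      · exact rel_swap (rel6 G j i hb ha)
    · rw [show mval k = 0 from by rw [mval, if_neg h0, if_neg h1, if_neg h2, if_neg h3]]
      rw [pow_zero]

/-- the abstract Coxeter system attached to `G` -/
def cox (G : SGCM I) : CoxeterSystem (cm G) (cm G).Group :=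
  (cm G).toCoxeterSystem

/-- the reflection representation of the abstract Weyl group -/
def rho (G : SGCM I) : (cm G).Group →* Equiv.Perm (I →₀ ℝ) :=
  (cox G).lift ⟨fun i => tau G i, liftable G⟩

lemma rho_simple (G : SGCM I) (i : I) :
    rho G ((cox G).simple i) = tau G i :=
  CoxeterSystem.lift_apply_simple (cox G) (liftable G) i

lemma rho_wordProd (G : SGCM I) (l : List I) :
    rho G ((cox G).wordProd l) = twrd G l := by
  induction l with
  | nil => rw [CoxeterSystem.wordProd_nil, map_one, twrd_nil]
  | cons i l ih => rw [CoxeterSystem.wordProd_cons, map_mul, rho_simple, ih, twrd_cons]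

lemma rho_linear (G : SGCM I) (w : (cm G).Group) (a b : ℝ) (x y : I →₀ ℝ) :
    rho G w (a • x + b • y) = a • rho G w x + b • rho G w y := by
  obtain ⟨l, rfl⟩ := (cox G).wordProd_surjective w
  rw [rho_wordProd]
  exact twrd_linear G l a b x y

lemma tau_span_left (G : SGCM I) (i t : I) (p q : ℝ) :
    tau G i (p • eps i + q • eps t)
      = (-Ar G t i * q - p) • eps i + q • eps t := by
  rw [tau_apply, PP_add, PP_smul, PP_smul, PP_eps, PP_eps, Ar_diag]
  module

lemma tau_span_right (G : SGCM I) (i t : I) (p q : ℝ) :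
    tau G t (p • eps i + q • eps t)
      = p • eps i + (-Ar G i t * p - q) • eps t := by
  rw [tau_apply, PP_add, PP_smul, PP_smul, PP_eps, PP_eps, Ar_diag]
  module

lemma twrd_concat (G : SGCM I) (l : List I) (a : I) :
    twrd G (l.concat a) = twrd G l * tau G a := by
  rw [List.concat_eq_append, twrd_append, twrd_singleton]

/-- the coefficients of the image of `eps i` under an alternating word -/
def altVec (G : SGCM I) (i t : I) : ℕ → ℝ × ℝ
  | 0 => (1, 0)
  | (r + 1) =>
      if Even r then ((altVec G i t r).1, (-Ar G i t) * (altVec G i t r).1 - (altVec G i t r).2)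
      else ((-Ar G t i) * (altVec G i t r).2 - (altVec G i t r).1, (altVec G i t r).2)

lemma altVec_zero (G : SGCM I) (i t : I) : altVec G i t 0 = (1, 0) := rfl

lemma altVec_succ (G : SGCM I) (i t : I) (r : ℕ) :
    altVec G i t (r + 1) =
      if Even r then ((altVec G i t r).1, (-Ar G i t) * (altVec G i t r).1 - (altVec G i t r).2)
      else ((-Ar G t i) * (altVec G i t r).2 - (altVec G i t r).1, (altVec G i t r).2) := rfl

lemma altVec_correct (G : SGCM I) (i t : I) (r : ℕ) :
    twrd G (CoxeterSystem.alternatingWord i t r) (eps i)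
      = (altVec G i t r).1 • eps i + (altVec G i t r).2 • eps t := by
  induction r with
  | zero =>
      rw [altVec_zero]
      show eps i = (1:ℝ) • eps i + (0:ℝ) • eps t
      module
  | succ r ih =>
      rw [CoxeterSystem.alternatingWord_succ', twrd_cons, Equiv.Perm.mul_apply, ih, altVec_succ]
      by_cases hr : Even r
      · rw [if_pos hr, if_pos hr, tau_span_right]
      · rw [if_neg hr, if_neg hr, tau_span_left]

/-- positivity for alternating words in the infinite dihedral case -/
lemma pos_inf (G : SGCM I) (i t : I) (hb : 1 ≤ -Ar G t i) (hc : 1 ≤ -Ar G i t)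
    (hbc : 4 ≤ (-Ar G t i) * (-Ar G i t)) : ∀ r : ℕ,
    (∀ p q : ℝ, 0 ≤ p → 0 ≤ q → (-Ar G t i) * q ≤ 2 * p →
      ∃ a b : ℝ, 0 ≤ a ∧ 0 ≤ b ∧
        twrd G (CoxeterSystem.alternatingWord i t r) (p • eps i + q • eps t)
          = a • eps i + b • eps t) ∧
    (∀ p q : ℝ, 0 ≤ p → 0 ≤ q → (-Ar G i t) * p ≤ 2 * q →
      ∃ a b : ℝ, 0 ≤ a ∧ 0 ≤ b ∧
        twrd G (CoxeterSystem.alternatingWord t i r) (p • eps i + q • eps t)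
          = a • eps i + b • eps t) := by
  intro r
  induction r with
  | zero =>
      constructor
      · intro p q hp hq _
        exact ⟨p, q, hp, hq, rfl⟩
      · intro p q hp hq _
        exact ⟨p, q, hp, hq, rfl⟩
  | succ r ih =>
      constructor
      · intro p q hp hq h
        rw [CoxeterSystem.alternatingWord_succ, twrd_concat, Equiv.Perm.mul_apply,
          tau_span_right]
        refine (ih.2 p (-Ar G i t * p - q) hp ?_ ?_)
        · nlinarith
        · nlinarith
      · intro p q hp hq h
        rw [CoxeterSystem.alternatingWord_succ, twrd_concat, Equiv.Perm.mul_apply,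
          tau_span_left]
        refine (ih.1 (-Ar G t i * q - p) q ?_ hq ?_)
        · nlinarith
        · nlinarith

/-- a two-letter word with no adjacent repetitions is an alternating word -/
lemma alt_char (i t : I) (ω : List I) :
    (∀ x ∈ ω, x = i ∨ x = t) → List.Chain' (· ≠ ·) ω →
    ω = CoxeterSystem.alternatingWord i t ω.length ∨
      ω = CoxeterSystem.alternatingWord t i ω.length := by
  induction ω using List.reverseRecOn with
  | nil => intro _ _; left; rfl
  | append_singleton ω' a ih =>
      intro hlet hchain
      unfold List.Chain' at hchain; rw [List.isChain_append] at hchain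
      have hlet' : ∀ x ∈ ω', x = i ∨ x = t := fun x hx => hlet x (by simp [hx])
      rcases Nat.eq_zero_or_pos ω'.length with h0 | hpos
      · rw [List.length_eq_zero_iff] at h0
        subst h0
        rcases hlet a (by simp) with ha | ha <;> subst ha
        · right; rfl
        · left; rfl
      · have hlast : ∀ y : I, ω' = CoxeterSystem.alternatingWord y a ω'.length → False := by
          intro y hy
          obtain ⟨m, hm⟩ := Nat.exists_eq_add_of_lt hpos
          rw [zero_add] at hm
          have : ω'.getLast? = some a := by
            rw [hy, hm, CoxeterSystem.alternatingWord_succ, List.concat_eq_append,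
              List.getLast?_concat]
          have := hchain.2.2 a this a (by simp)
          exact this rfl
        rcases ih hlet' hchain.1 with h | h <;>
          rcases hlet a (by simp) with ha | ha <;> subst ha
        · right
          rw [List.length_append, List.length_singleton,
            CoxeterSystem.alternatingWord_succ, ← List.concat_eq_append, h]
          simp
        · exact (hlast i h).elim
        · exact (hlast t h).elim
        · left
          rw [List.length_append, List.length_singleton,
            CoxeterSystem.alternatingWord_succ, ← List.concat_eq_append, h]
          simp

lemma altVec_one (G : SGCM I) (i t : I) : altVec G i t 1 = (1, -Ar G i t) := by
  rw [show (1:ℕ) = 0 + 1 from rfl, altVec_succ, if_pos (by decide : Even 0), altVec_zero]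
  all_goals simp only [Prod.mk.injEq]
  all_goals exact ⟨trivial, by ring⟩

lemma altVec_two (G : SGCM I) (i t : I) :
    altVec G i t 2 = ((-Ar G t i) * (-Ar G i t) - 1, -Ar G i t) := by
  rw [show (2:ℕ) = 1 + 1 from rfl, altVec_succ, if_neg (by decide : ¬ Even 1), altVec_one]
  all_goals simp only [Prod.mk.injEq]
  all_goals exact ⟨by ring, by ring⟩

lemma altVec_three (G : SGCM I) (i t : I) :
    altVec G i t 3 = ((-Ar G t i) * (-Ar G i t) - 1,
      (-Ar G i t) * ((-Ar G t i) * (-Ar G i t) - 1) - (-Ar G i t)) := by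
  rw [show (3:ℕ) = 2 + 1 from rfl, altVec_succ, if_pos (by decide : Even 2), altVec_two]
  all_goals simp only [Prod.mk.injEq]
  all_goals exact ⟨by ring, by ring⟩

lemma altVec_four (G : SGCM I) (i t : I) :
    altVec G i t 4 = ((-Ar G t i) * ((-Ar G i t) * ((-Ar G t i) * (-Ar G i t) - 1)
        - (-Ar G i t)) - ((-Ar G t i) * (-Ar G i t) - 1),
      (-Ar G i t) * ((-Ar G t i) * (-Ar G i t) - 1) - (-Ar G i t)) := by
  rw [show (4:ℕ) = 3 + 1 from rfl, altVec_succ, if_neg (by decide : ¬ Even 3), altVec_three]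
  all_goals simp only [Prod.mk.injEq]
  all_goals exact ⟨by ring, by ring⟩

lemma altVec_five (G : SGCM I) (i t : I) :
    altVec G i t 5 = ((-Ar G t i) * ((-Ar G i t) * ((-Ar G t i) * (-Ar G i t) - 1)
        - (-Ar G i t)) - ((-Ar G t i) * (-Ar G i t) - 1),
      (-Ar G i t) * ((-Ar G t i) * ((-Ar G i t) * ((-Ar G t i) * (-Ar G i t) - 1)
        - (-Ar G i t)) - ((-Ar G t i) * (-Ar G i t) - 1))
        - ((-Ar G i t) * ((-Ar G t i) * (-Ar G i t) - 1) - (-Ar G i t))) := by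
  rw [show (5:ℕ) = 4 + 1 from rfl, altVec_succ, if_pos (by decide : Even 4), altVec_four]
  all_goals simp only [Prod.mk.injEq]
  all_goals exact ⟨by ring, by ring⟩

lemma cmval_cases (G : SGCM I) (i t : I) (hit : i ≠ t) :
    ((cm G) i t = 0 ∧ 4 ≤ G.a i t * G.a t i) ∨
    (∃ k : ℤ, 0 ≤ k ∧ k ≤ 3 ∧ G.a i t * G.a t i = k ∧ (cm G) i t = mval k) := by
  have h := cm_apply G i t
  rw [if_neg hit] at h
  have hk0 : 0 ≤ G.a i t * G.a t i := by
    have h1 := G.a_offdiag i t hit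
    have h2 := G.a_offdiag t i (Ne.symm hit)
    nlinarith
  by_cases h3 : G.a i t * G.a t i ≤ 3
  · right
    exact ⟨G.a i t * G.a t i, hk0, h3, rfl, h⟩
  · left
    refine ⟨?_, by omega⟩
    rw [h, mval]
    split_ifs <;> omega

lemma rank2 (G : SGCM I) (i t : I) (hit : i ≠ t) (ω : List I)
    (hlet : ∀ x ∈ ω, x = i ∨ x = t)
    (hred : (cox G).length ((cox G).wordProd ω) = ω.length)
    (hasc : (cox G).length ((cox G).wordProd ω)
      < (cox G).length ((cox G).wordProd ω * (cox G).simple i)) :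
    ∃ a b : ℝ, 0 ≤ a ∧ 0 ≤ b ∧
      rho G ((cox G).wordProd ω) (eps i) = a • eps i + b • eps t := by
  classical
  obtain ⟨ω₀, hlen₀, hlet₀, hprod₀⟩ := Nat.sInf_mem
    (⟨ω.length, ω, rfl, hlet, rfl⟩ : Set.Nonempty {n | ∃ ω' : List I, ω'.length = n ∧
      (∀ x ∈ ω', x = i ∨ x = t) ∧ (cox G).wordProd ω' = (cox G).wordProd ω})
  have hle : ω₀.length ≤ ω.length := by
    rw [hlen₀]
    exact Nat.sInf_le ⟨ω, rfl, hlet, rfl⟩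
  have hred₀ : (cox G).length ((cox G).wordProd ω₀) = ω₀.length := by
    have h1 := (cox G).length_wordProd_le ω₀
    have h2 : (cox G).length ((cox G).wordProd ω₀) = ω.length := by rw [hprod₀, hred]
    omega
  -- no adjacent repetitions in the minimal word
  have hchain : List.Chain' (· ≠ ·) ω₀ := by
    unfold List.Chain'; rw [List.isChain_iff_getElem]
    intro n hn
    by_contra heq
    have hn1 : n < ω₀.length := by omega
    have hn2 : n + 1 < ω₀.length := by omega
    have e1 : (cox G).wordProd ω₀
        = (cox G).wordProd (ω₀.take n ++ ω₀.drop (n + 2)) := by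
      conv_lhs => rw [← List.take_append_drop n ω₀]
      rw [CoxeterSystem.wordProd_append, CoxeterSystem.wordProd_append,
        List.drop_eq_getElem_cons hn1, List.drop_eq_getElem_cons hn2,
        CoxeterSystem.wordProd_cons, CoxeterSystem.wordProd_cons]
      congr 2
      rw [show ω₀[n] = ω₀[n+1] from by
          simpa [List.get_eq_getElem] using heq,
        ← mul_assoc, CoxeterSystem.simple_mul_simple_self, one_mul]
    have hmem : (ω₀.take n ++ ω₀.drop (n + 2)).length ∈ {n | ∃ ω' : List I, ω'.length = n ∧
        (∀ x ∈ ω', x = i ∨ x = t) ∧ (cox G).wordProd ω' = (cox G).wordProd ω} := by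
      refine ⟨ω₀.take n ++ ω₀.drop (n + 2), rfl, ?_, by rw [← e1, hprod₀]⟩
      intro x hx
      rcases List.mem_append.mp hx with h | h
      · exact hlet₀ x (List.mem_of_mem_take h)
      · exact hlet₀ x (List.mem_of_mem_drop h)
    have hlen' : (ω₀.take n ++ ω₀.drop (n + 2)).length = ω₀.length - 2 := by
      rw [List.length_append, List.length_take, List.length_drop]
      omega
    have := Nat.sInf_le hmem
    omega
  -- trivial case: empty word
  rcases Nat.eq_zero_or_pos ω₀.length with h0 | hpos
  · rw [List.length_eq_zero_iff] at h0
    refine ⟨1, 0, zero_le_one, le_rfl, ?_⟩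
    rw [← hprod₀, h0, CoxeterSystem.wordProd_nil, map_one]
    show eps i = (1:ℝ) • eps i + (0:ℝ) • eps t
    module
  -- the minimal word cannot end with the letter i
  have hnoti : ∀ x : I, (cox G).wordProd ω₀
      = (cox G).wordProd (CoxeterSystem.alternatingWord x i ω₀.length) → False := by
    intro x hx
    obtain ⟨m, hm⟩ : ∃ m, ω₀.length = m + 1 := ⟨ω₀.length - 1, by omega⟩
    have e2 : (cox G).wordProd ω₀ * (cox G).simple i
        = (cox G).wordProd (CoxeterSystem.alternatingWord i x m) := by
      rw [hx, hm, CoxeterSystem.alternatingWord_succ, CoxeterSystem.wordProd_concat,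
        mul_assoc, CoxeterSystem.simple_mul_simple_self, mul_one]
    have h3 : (cox G).length ((cox G).wordProd ω₀ * (cox G).simple i) ≤ m := by
      rw [e2]
      have := (cox G).length_wordProd_le (CoxeterSystem.alternatingWord i x m)
      simpa using this
    rw [← hprod₀] at hasc hred
    omega
  rcases alt_char i t ω₀ hlet₀ hchain with hω | hω
  swap
  · exact absurd (congrArg (cox G).wordProd hω) (hnoti t)
  -- now ω₀ = alternatingWord i t r
  have hπ : (cox G).wordProd ω = (cox G).wordProd
      (CoxeterSystem.alternatingWord i t ω₀.length) := by
    rw [← hprod₀]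
    exact congrArg _ hω
  rcases cmval_cases G i t hit with ⟨hM0, hk4⟩ | ⟨k, hk0, hk3, hkdef, hMval⟩
  · -- infinite dihedral case
    have hB1 : (1:ℝ) ≤ -Ar G t i := by
      have h1 := G.a_offdiag t i (Ne.symm hit)
      have h2 : G.a t i ≠ 0 := by
        intro hz
        rw [hz, mul_zero] at hk4
        omega
      have h3 : G.a t i ≤ -1 := by omega
      have h4 : (G.a t i : ℝ) ≤ -1 := by exact_mod_cast h3
      rw [Ar]
      linarith
    have hC1 : (1:ℝ) ≤ -Ar G i t := by
      have h1 := G.a_offdiag i t hit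
      have h2 : G.a i t ≠ 0 := by
        intro hz
        rw [hz, zero_mul] at hk4
        omega
      have h3 : G.a i t ≤ -1 := by omega
      have h4 : (G.a i t : ℝ) ≤ -1 := by exact_mod_cast h3
      rw [Ar]
      linarith
    have hBC : (4:ℝ) ≤ (-Ar G t i) * (-Ar G i t) := by
      rw [neg_mul_neg, Ar, Ar]
      push_cast
      rw [show ((G.a t i : ℝ)) * ((G.a i t : ℝ)) = ((G.a i t * G.a t i : ℤ) : ℝ) from by
        push_cast; ring]
      exact_mod_cast hk4
    obtain ⟨a, b, ha, hb, hab⟩ := (pos_inf G i t hB1 hC1 hBC ω₀.length).1 1 0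
      zero_le_one le_rfl (by norm_num)
    simp only [one_smul, zero_smul, add_zero] at hab
    exact ⟨a, b, ha, hb, by rw [hπ, rho_wordProd, hab]⟩
  · -- finite dihedral cases
    have hMne : (cm G) i t ≠ 0 := by
      rw [hMval, mval]
      split_ifs <;> omega
    have hrle : ω₀.length ≤ (cm G) i t := by
      by_contra hgt
      push_neg at hgt
      refine (cox G).not_isReduced_alternatingWord i t hMne hgt ?_
      show (cox G).length ((cox G).wordProd (CoxeterSystem.alternatingWord i t ω₀.length))
        = (CoxeterSystem.alternatingWord i t ω₀.length).length
      rw [← hω]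
      exact hred₀
    have hrne : ω₀.length ≠ (cm G) i t := by
      intro he
      apply hnoti t
      have hbr := (cox G).wordProd_braidWord_eq i t
      calc (cox G).wordProd ω₀
          = (cox G).wordProd (CoxeterSystem.alternatingWord i t ((cm G) i t)) := by
            rw [← he]; exact congrArg _ hω
        _ = (cox G).wordProd (CoxeterSystem.alternatingWord t i ((cm G) t i)) := hbr
        _ = (cox G).wordProd (CoxeterSystem.alternatingWord t i ω₀.length) := by
            rw [(cm G).symmetric t i, ← he]
    have hrlt : ω₀.length < (cm G) i t := lt_of_le_of_ne hrle hrne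
    -- real number facts
    have hB : (0:ℝ) ≤ -Ar G t i := by
      have h3 := G.a_offdiag t i (Ne.symm hit)
      have h4 : (G.a t i : ℝ) ≤ 0 := by exact_mod_cast h3
      rw [Ar]
      linarith
    have hC : (0:ℝ) ≤ -Ar G i t := by
      have h3 := G.a_offdiag i t hit
      have h4 : (G.a i t : ℝ) ≤ 0 := by exact_mod_cast h3
      rw [Ar]
      linarith
    have hK : (-Ar G t i) * (-Ar G i t) = (k : ℝ) := by
      rw [neg_mul_neg, Ar, Ar]
      push_cast
      rw [show ((G.a t i : ℝ)) * ((G.a i t : ℝ)) = ((G.a i t * G.a t i : ℤ) : ℝ) from by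
        push_cast; ring]
      exact_mod_cast hkdef
    refine ⟨(altVec G i t ω₀.length).1, (altVec G i t ω₀.length).2, ?_, ?_,
      by rw [hπ, rho_wordProd, altVec_correct]⟩ <;>
    · rw [hMval] at hrlt
      obtain ⟨r, hr⟩ : ∃ r, ω₀.length = r := ⟨ω₀.length, rfl⟩
      rw [hr] at hrlt hpos ⊢
      clear hr hlen₀ hle hred₀ hπ hω hnoti hprod₀ hasc hred hlet₀ hlet hchain hrle hrne
        hMne hMval hkdef
      interval_cases k
      · push_cast at hK
        rw [show mval 0 = 2 from rfl] at hrlt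
        interval_cases r <;>
          simp only [altVec_zero, altVec_one] <;> norm_num <;> nlinarith [hB, hC, hK]
      · push_cast at hK
        rw [show mval 1 = 3 from rfl] at hrlt
        interval_cases r <;>
          simp only [altVec_zero, altVec_one, altVec_two] <;> norm_num <;>
          nlinarith [hB, hC, hK]
      · push_cast at hK
        rw [show mval 2 = 4 from rfl] at hrlt
        interval_cases r <;>
          simp only [altVec_zero, altVec_one, altVec_two, altVec_three] <;> norm_num <;>
          nlinarith [hB, hC, hK]
      · push_cast at hK
        rw [show mval 3 = 6 from rfl] at hrlt
        have hK' : Ar G t i * Ar G i t = 3 := by linear_combination hK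
        have hKc : Ar G i t * (Ar G t i * Ar G i t) = 3 * Ar G i t := by rw [hK']; ring
        have hKA : (Ar G t i * Ar G i t) * ((Ar G t i * Ar G i t) * Ar G i t)
            = 9 * Ar G i t := by rw [hK']; ring
        interval_cases r <;>
          simp only [altVec_zero, altVec_one, altVec_two, altVec_three, altVec_four,
            altVec_five] <;> norm_num <;> nlinarith [hB, hC, hK, hK', hKc, hKA]

/-- The key positivity theorem: if `ℓ(w sᵢ) > ℓ(w)` then `w` maps the `i`-th simple
(co)root to a nonnegative vector. -/
lemma B1 (G : SGCM I) : ∀ n : ℕ, ∀ (w : (cm G).Group) (i : I), (cox G).length w = n →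
    (cox G).length w < (cox G).length (w * (cox G).simple i) →
    ∀ j, 0 ≤ rho G w (eps i) j := by
  intro n
  induction n using Nat.strong_induction_on with
  | _ n IH =>
  intro w i hn hasc j
  classical
  rcases Nat.eq_zero_or_pos n with h0 | hpos
  · have hw : w = 1 := (cox G).length_eq_zero_iff.mp (hn.trans h0)
    subst hw
    rw [map_one]
    show (0:ℝ) ≤ eps i j
    rw [eps, Finsupp.single_apply]
    split <;> norm_num
  · have hw1 : w ≠ 1 := by
      intro h
      rw [h, (cox G).length_one] at hn
      omega
    obtain ⟨t, ht⟩ := (cox G).exists_rightDescent_of_ne_one hw1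
    have ht' : (cox G).length (w * (cox G).simple t) < (cox G).length w := ht
    have hti : t ≠ i := by
      rintro rfl
      omega
    classical
    have hSne : Set.Nonempty {m | ∃ (v : (cm G).Group) (ω : List I),
        (cox G).length v = m ∧ w = v * (cox G).wordProd ω ∧
        (∀ x ∈ ω, x = i ∨ x = t) ∧ (cox G).length v + ω.length = n} :=
      ⟨n, w, [], hn, by simp, by simp, by simp [hn]⟩
    obtain ⟨v₁, ω, hv₁, hw_eq, hωlet, hsum⟩ := Nat.sInf_mem hSne
    have hwst : (cox G).length (w * (cox G).simple t) + 1 = n := by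
      rcases (cox G).length_mul_simple w t with h | h
      · omega
      · omega
    have hmem1 : n - 1 ∈ {m | ∃ (v : (cm G).Group) (ω : List I),
        (cox G).length v = m ∧ w = v * (cox G).wordProd ω ∧
        (∀ x ∈ ω, x = i ∨ x = t) ∧ (cox G).length v + ω.length = n} := by
      refine ⟨w * (cox G).simple t, [t], by omega, ?_, ?_, ?_⟩
      · rw [CoxeterSystem.wordProd_singleton]
        exact ((cox G).simple_mul_simple_cancel_right t).symm
      · intro x hx
        rw [List.mem_singleton] at hx
        exact Or.inr hx
      · simpa using hwst
    have hk₀n : (cox G).length v₁ < n := by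
      have := Nat.sInf_le hmem1
      omega
    have hasc_v₁ : ∀ u : I, u = i ∨ u = t →
        (cox G).length v₁ < (cox G).length (v₁ * (cox G).simple u) := by
      intro u hu
      by_contra hcon
      push_neg at hcon
      have hdesc : (cox G).length (v₁ * (cox G).simple u) + 1 = (cox G).length v₁ := by
        rcases (cox G).length_mul_simple v₁ u with h | h
        · omega
        · exact h
      have hmem2 : (cox G).length v₁ - 1 ∈ {m | ∃ (v : (cm G).Group) (ω : List I),
          (cox G).length v = m ∧ w = v * (cox G).wordProd ω ∧
          (∀ x ∈ ω, x = i ∨ x = t) ∧ (cox G).length v + ω.length = n} := by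
        refine ⟨v₁ * (cox G).simple u, u :: ω, by omega, ?_, ?_, ?_⟩
        · rw [CoxeterSystem.wordProd_cons, hw_eq, mul_assoc,
            (cox G).simple_mul_simple_cancel_left]
        · intro x hx
          rcases List.mem_cons.mp hx with h | h
          · exact h ▸ hu
          · exact hωlet x h
        · simp only [List.length_cons]
          omega
      have := Nat.sInf_le hmem2
      omega
    have hredω : (cox G).length ((cox G).wordProd ω) = ω.length := by
      have h1 := (cox G).length_wordProd_le ω
      have h2 : n ≤ (cox G).length v₁ + (cox G).length ((cox G).wordProd ω) := by
        rw [← hn, hw_eq]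
        exact (cox G).length_mul_le v₁ _
      omega
    have hascω : (cox G).length ((cox G).wordProd ω)
        < (cox G).length ((cox G).wordProd ω * (cox G).simple i) := by
      by_contra hcon
      push_neg at hcon
      have hdesc : (cox G).length ((cox G).wordProd ω * (cox G).simple i) + 1
          = (cox G).length ((cox G).wordProd ω) := by
        rcases (cox G).length_mul_simple ((cox G).wordProd ω) i with h | h
        · omega
        · exact h
      have hb : (cox G).length (w * (cox G).simple i) ≤ n - 1 := by
        rw [hw_eq, mul_assoc]
        have := (cox G).length_mul_le v₁ ((cox G).wordProd ω * (cox G).simple i)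
        omega
      omega
    obtain ⟨a, b, ha, hb, hab⟩ := rank2 G i t (Ne.symm hti) ω hωlet hredω hascω
    have he1 := IH _ hk₀n v₁ i rfl (hasc_v₁ i (Or.inl rfl))
    have he2 := IH _ hk₀n v₁ t rfl (hasc_v₁ t (Or.inr rfl))
    rw [hw_eq, map_mul, Equiv.Perm.mul_apply, hab, rho_linear, Finsupp.add_apply,
      Finsupp.smul_apply, Finsupp.smul_apply, smul_eq_mul, smul_eq_mul]
    exact add_nonneg (mul_nonneg ha (he1 j)) (mul_nonneg hb (he2 j))

lemma B1' (G : SGCM I) (w : (cm G).Group) (i : I)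
    (h : (cox G).length w < (cox G).length (w * (cox G).simple i)) :
    ∀ j, 0 ≤ rho G w (eps i) j := B1 G _ w i rfl h

lemma rho_neg (G : SGCM I) (w : (cm G).Group) (x : I →₀ ℝ) :
    rho G w (-x) = - rho G w x := by
  have := rho_linear G w (-1) 0 x x
  simpa using this

lemma B1_neg (G : SGCM I) (w : (cm G).Group) (i : I)
    (h : (cox G).length (w * (cox G).simple i) < (cox G).length w) :
    ∀ j, rho G w (eps i) j ≤ 0 := by
  intro j
  have h2 : (cox G).length (w * (cox G).simple i)
      < (cox G).length ((w * (cox G).simple i) * (cox G).simple i) := by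
    rw [(cox G).simple_mul_simple_cancel_right]
    exact h
  have hB := B1' G (w * (cox G).simple i) i h2 j
  rw [map_mul, Equiv.Perm.mul_apply, rho_simple, tau_eps_self, rho_neg,
    Finsupp.neg_apply] at hB
  linarith

lemma rho_injective (G : SGCM I) : Function.Injective (rho G) := by
  have key : ∀ w : (cm G).Group, rho G w = 1 → w = 1 := by
    intro w h
    by_contra hw
    obtain ⟨i, hi⟩ := (cox G).exists_rightDescent_of_ne_one hw
    have := B1_neg G w i hi i
    rw [h] at this
    simp only [Equiv.Perm.one_apply, eps, Finsupp.single_eq_same] at this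
    norm_num at this
  intro x y hxy
  have h1 : rho G (x * y⁻¹) = 1 := by
    rw [map_mul, map_inv, hxy, mul_inv_cancel]
  exact mul_inv_eq_one.mp (key _ h1)

lemma trichotomy (G : SGCM I) (w : (cm G).Group) (i : I) :
    (∀ j, 0 ≤ rho G w (eps i) j) ∨ (∀ j, rho G w (eps i) j ≤ 0) := by
  rcases (cox G).length_mul_simple w i with h | h
  · exact Or.inl (B1' G w i (by omega))
  · exact Or.inr (B1_neg G w i (by omega))

/-! ### dual bridge -/

/-- diagonal rescaling -/
def Dm (f : I → ℝ) (x : I →₀ ℝ) : I →₀ ℝ := x.sum fun t c => Finsupp.single t (f t * c)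

lemma Dm_apply (f : I → ℝ) (x : I →₀ ℝ) (j : I) : Dm f x j = f j * x j := by
  classical
  rw [Dm, Finsupp.sum_apply]
  rw [Finsupp.sum_eq_single j (fun t _ ht => by rw [Finsupp.single_eq_of_ne' ht])
    (by simp)]
  rw [Finsupp.single_eq_same]

lemma PP_Dm (g : I → ℝ) (f : I → ℝ) (x : I →₀ ℝ) :
    PP g (Dm f x) = PP (fun t => f t * g t) x := by
  classical
  unfold PP Dm
  rw [Finsupp.sum_sum_index (by intro a; exact zero_mul _)
    (by intro a b₁ b₂; exact add_mul _ _ _)]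
  refine Finsupp.sum_congr fun t _ => ?_
  rw [Finsupp.sum_single_index (zero_mul (g t))]
  show f t * x t * g t = x t * (f t * g t)
  ring

lemma tau_dual (G : SGCM I) (i : I) (x : I →₀ ℝ) :
    tau G.dual i x = Dm (fun j => (G.d j)⁻¹) (tau G i (Dm G.d x)) := by
  classical
  have hPP : PP (fun t => Ar G t i) (Dm G.d x)
      = G.d i * PP (fun t => Ar G.dual t i) x := by
    rw [PP_Dm]
    unfold PP
    rw [Finsupp.mul_sum]
    refine Finsupp.sum_congr fun t _ => ?_
    show x t * (G.d t * Ar G t i) = G.d i * (x t * Ar G.dual t i)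
    have hsymm : G.d t * Ar G t i = G.d i * Ar G.dual t i := G.symm t i
    rw [hsymm]
    ring
  ext j
  rw [Dm_apply, tau_apply, tau_apply, Finsupp.sub_apply, Finsupp.sub_apply,
    Finsupp.smul_apply, Finsupp.smul_apply, Dm_apply, hPP, smul_eq_mul, smul_eq_mul]
  have hdj : G.d j ≠ 0 := ne_of_gt (G.d_pos j)
  rw [eps, Finsupp.single_apply]
  split_ifs with hij
  · subst hij
    have hdi : G.d i ≠ 0 := ne_of_gt (G.d_pos i)
    field_simp
  · field_simp
    ring

lemma Dm_cancel (G : SGCM I) (y : I →₀ ℝ) :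
    Dm G.d (Dm (fun j => (G.d j)⁻¹) y) = y := by
  ext j
  rw [Dm_apply, Dm_apply]
  have hdj : G.d j ≠ 0 := ne_of_gt (G.d_pos j)
  field_simp

lemma twrd_dual (G : SGCM I) (l : List I) (x : I →₀ ℝ) :
    twrd G.dual l x = Dm (fun j => (G.d j)⁻¹) (twrd G l (Dm G.d x)) := by
  induction l generalizing x with
  | nil =>
      show x = Dm (fun j => (G.d j)⁻¹) (Dm G.d x)
      ext j
      rw [Dm_apply, Dm_apply]
      have hdj : G.d j ≠ 0 := ne_of_gt (G.d_pos j)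
      field_simp
  | cons a l ih =>
      rw [twrd_cons, twrd_cons, Equiv.Perm.mul_apply, Equiv.Perm.mul_apply, ih,
        tau_dual, Dm_cancel]

/-! ### bridges between the two representations -/

lemma wp_coord (G : SGCM I) (u : List I) (lam : I → ℝ) (j : I) :
    G.wordProd u lam j = PP lam (twrd G u.reverse (eps j)) := by
  rw [← PP_eps (G.wordProd u lam) j, adj]

open scoped Classical in
lemma PP_delta (j : I) (y : I →₀ ℝ) :
    PP (fun t => if t = j then (1:ℝ) else 0) y = y j := by
  classical
  unfold PP
  rw [Finsupp.sum_eq_single j (fun t _ ht => by simp [ht]) (by simp)]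
  simp

lemma wp_eq_iff (G : SGCM I) (u u' : List I) :
    G.wordProd u = G.wordProd u' ↔
      (cox G).wordProd u.reverse = (cox G).wordProd u'.reverse := by
  classical
  constructor
  · intro h
    apply rho_injective G
    rw [rho_wordProd, rho_wordProd]
    apply Equiv.ext
    intro x
    ext j
    have e1 := adj G u (fun t => if t = j then (1:ℝ) else 0) x
    have e2 := adj G u' (fun t => if t = j then (1:ℝ) else 0) x
    rw [h] at e1
    have := e1.symm.trans e2
    rwa [PP_delta, PP_delta] at this
  · intro h
    apply Equiv.ext
    intro lam
    funext j
    rw [wp_coord, wp_coord, ← rho_wordProd, ← rho_wordProd, h]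

lemma length_transfer (G : SGCM I) (u : List I) :
    G.length (G.wordProd u) = (cox G).length ((cox G).wordProd u.reverse) := by
  unfold SGCM.length
  apply le_antisymm
  · obtain ⟨ω, hlen, hprod⟩ := (cox G).exists_reduced_word ((cox G).wordProd u.reverse)
    apply Nat.sInf_le
    refine ⟨ω.reverse, by rw [List.length_reverse, hprod]; exact hlen.symm, ?_⟩
    exact (wp_eq_iff G ω.reverse u).mpr (by rw [List.reverse_reverse]; exact hprod.symm)
  · have hne : {n | ∃ l : List I, l.length = n ∧ G.wordProd l = G.wordProd u}.Nonempty :=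
      ⟨u.length, u, rfl, rfl⟩
    apply le_csInf hne
    rintro n ⟨v, hvlen, hvprod⟩
    calc (cox G).length ((cox G).wordProd u.reverse)
        = (cox G).length ((cox G).wordProd v.reverse) := by
          rw [(wp_eq_iff G v u).mp hvprod]
      _ ≤ v.reverse.length := (cox G).length_wordProd_le _
      _ = n := by simp [hvlen]

lemma cw_bridge (G : SGCM I) (lam : I → ℝ) (u : List I) (j : I) :
    PP lam (rho G ((cox G).wordProd u.reverse) (eps j)) = G.wordProd u lam j := by
  rw [rho_wordProd]
  exact (wp_coord G u lam j).symm

lemma PP_zero (f : I → ℝ) : PP f 0 = 0 := Finsupp.sum_zero_index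

lemma PP_neg (f : I → ℝ) (x : I →₀ ℝ) : PP f (-x) = - PP f x := by
  have := PP_sub f 0 x
  simpa [PP_zero] using this

lemma rho_mul_simple_eps (G : SGCM I) (v : (cm G).Group) (β : I) :
    rho G (v * (cox G).simple β) (eps β) = - rho G v (eps β) := by
  rw [map_mul, Equiv.Perm.mul_apply, rho_simple, tau_eps_self, rho_neg]

lemma rho_mul_simple_eps' (G : SGCM I) (v : (cm G).Group) (β j : I) :
    rho G (v * (cox G).simple β) (eps j)
      = rho G v (eps j) - Ar G j β • rho G v (eps β) := by
  rw [map_mul, Equiv.Perm.mul_apply, rho_simple, tau_apply, PP_eps]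
  have h := rho_linear G v 1 (-(Ar G j β)) (eps j) (eps β)
  rw [one_smul] at h
  rw [show eps j - Ar G j β • eps β = eps j + (-(Ar G j β)) • eps β from by module, h]
  module

/-- The central lemma: the length of any element whose action on the weight gives
the same pairings as a (co)minuscule element is at least the (co)minuscule word
length. -/
lemma mainW (G : SGCM I) (lam : I → ℝ) (hdom : ∀ i, 0 ≤ lam i) :
    ∀ l : List I, (G.MinusculeWord lam l ∨ G.dual.MinusculeWord lam l) →
    ∀ x : (cm G).Group,
      (∀ j, PP lam (rho G x (eps j))
        = PP lam (rho G ((cox G).wordProd l.reverse) (eps j))) →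
      l.length ≤ (cox G).length x := by
  intro l
  induction l with
  | nil => intro _ x _; simp
  | cons β l ih =>
    intro hmin x hx
    classical
    have hwstar : (cox G).wordProd (β :: l).reverse
        = (cox G).wordProd l.reverse * (cox G).simple β := by
      rw [List.reverse_cons, CoxeterSystem.wordProd_append,
        CoxeterSystem.wordProd_singleton]
    have hκ : 0 < PP lam (rho G ((cox G).wordProd l.reverse) (eps β)) := by
      rcases hmin with ⟨_, h1⟩ | ⟨_, h1⟩
      · rw [cw_bridge G lam l β, h1]
        norm_num
      · have hd : G.dual.wordProd l lam β = 1 := h1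
        rw [wp_coord G.dual l lam β, twrd_dual] at hd
        have hDme : Dm G.d (eps β) = G.d β • eps β := by
          ext j
          rw [Dm_apply, Finsupp.smul_apply, smul_eq_mul, eps, Finsupp.single_apply]
          split_ifs with h
          · subst h; rfl
          · ring
        rw [hDme] at hd
        have htws : twrd G l.reverse (G.d β • eps β)
            = G.d β • twrd G l.reverse (eps β) := by
          have := twrd_linear G l.reverse (G.d β) 0 (eps β) (eps β)
          simpa using this
        rw [htws] at hd
        have hDms : Dm (fun j => (G.d j)⁻¹) (G.d β • twrd G l.reverse (eps β))
            = G.d β • Dm (fun j => (G.d j)⁻¹) (twrd G l.reverse (eps β)) := by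
          ext j
          rw [Dm_apply, Finsupp.smul_apply, Finsupp.smul_apply, Dm_apply,
            smul_eq_mul, smul_eq_mul]
          ring
        rw [hDms, PP_smul] at hd
        have hξρ : rho G ((cox G).wordProd l.reverse) (eps β)
            = twrd G l.reverse (eps β) := by rw [rho_wordProd]
        rw [hξρ]
        rcases trichotomy G ((cox G).wordProd l.reverse) β with hpos | hneg
        · rw [hξρ] at hpos
          by_contra hc
          push_neg at hc
          have h0' : PP lam (twrd G l.reverse (eps β)) = 0 :=
            le_antisymm hc (PP_nonneg hdom hpos)
          have hterm : ∀ t ∈ (twrd G l.reverse (eps β)).support,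
              (twrd G l.reverse (eps β)) t * lam t = 0 := by
            exact (Finset.sum_eq_zero_iff_of_nonneg
              (fun t _ => mul_nonneg (hpos t) (hdom t))).mp h0'
          have h00 : PP lam (Dm (fun j => (G.d j)⁻¹) (twrd G l.reverse (eps β))) = 0 := by
            rw [PP_Dm]
            apply Finset.sum_eq_zero
            intro t htsup
            show (twrd G l.reverse (eps β)) t * ((G.d t)⁻¹ * lam t) = 0
            rw [show (twrd G l.reverse (eps β)) t * ((G.d t)⁻¹ * lam t)
                = (G.d t)⁻¹ * ((twrd G l.reverse (eps β)) t * lam t) from by ring,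
              hterm t htsup, mul_zero]
          rw [h00, mul_zero] at hd
          norm_num at hd
        · rw [hξρ] at hneg
          exfalso
          have hle : PP lam (Dm (fun j => (G.d j)⁻¹) (twrd G l.reverse (eps β))) ≤ 0 := by
            rw [PP_Dm]
            exact PP_nonpos
              (fun j => mul_nonneg (le_of_lt (inv_pos.mpr (G.d_pos j))) (hdom j)) hneg
          nlinarith [G.d_pos β, hd, hle]
    have hxβneg : PP lam (rho G x (eps β)) < 0 := by
      rw [hx β, hwstar, rho_mul_simple_eps, PP_neg]
      linarith
    have hdesc : (cox G).length (x * (cox G).simple β) + 1 = (cox G).length x := by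
      rcases (cox G).length_mul_simple x β with h | h
      · exfalso
        have hnn := PP_nonneg hdom (B1' G x β (by omega))
        linarith
      · exact h
    have hx' : ∀ j, PP lam (rho G (x * (cox G).simple β) (eps j))
        = PP lam (rho G ((cox G).wordProd l.reverse) (eps j)) := by
      intro j
      have e1 : PP lam (rho G ((cox G).wordProd (β :: l).reverse) (eps j))
          = PP lam (rho G ((cox G).wordProd l.reverse) (eps j))
            - Ar G j β * PP lam (rho G ((cox G).wordProd l.reverse) (eps β)) := by
        rw [hwstar, rho_mul_simple_eps', PP_sub, PP_smul]
      have e2 : PP lam (rho G ((cox G).wordProd (β :: l).reverse) (eps β))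
          = - PP lam (rho G ((cox G).wordProd l.reverse) (eps β)) := by
        rw [hwstar, rho_mul_simple_eps, PP_neg]
      rw [rho_mul_simple_eps', PP_sub, PP_smul, hx j, hx β, e1, e2]
      ring
    have hmin' : G.MinusculeWord lam l ∨ G.dual.MinusculeWord lam l :=
      hmin.elim (fun h => Or.inl h.1) (fun h => Or.inr h.1)
    have hrec := ih hmin' (x * (cox G).simple β) hx'
    simp only [List.length_cons]
    omega

lemma wp_singleton (G : SGCM I) (i : I) : G.wordProd [i] = G.srefl i := by
  simp [SGCM.wordProd]

lemma srefl_inv (G : SGCM I) (i : I) : (G.srefl i)⁻¹ = G.srefl i :=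
  inv_eq_of_mul_eq_one_right (srefl_sq G i)

lemma wp_reverse (G : SGCM I) (z : List I) :
    G.wordProd z.reverse = (G.wordProd z)⁻¹ := by
  induction z with
  | nil => simp [wp_nil]
  | cons a z ih =>
      rw [List.reverse_cons, wp_append, ih, wp_singleton, wp_cons, mul_inv_rev, srefl_inv]

lemma wp_fix (G : SGCM I) (lam : I → ℝ) (z : List I) (hz : ∀ j ∈ z, lam j = 0) :
    G.wordProd z lam = lam := by
  induction z with
  | nil => rfl
  | cons a z ih =>
      rw [wp_cons, Equiv.Perm.mul_apply, ih (fun j hj => hz j (List.mem_cons_of_mem a hj))]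
      funext j
      rw [srefl_apply, hz a List.mem_cons_self, zero_mul, sub_zero]

end

end S2
end KM

/-- Let `Λ` be a dominant weight and `W_P` the subgroup generated by the
simple reflections `s_γ` with `⟨Λ, γ^∨⟩ = 0`. If `w` is `Λ`-minuscule or `Λ`-cominuscule,
then `w` is a minimal length representative of its coset `w W_P`; equivalently
`ℓ(w s_γ) = ℓ(w) + 1` for every simple root `γ` with `⟨Λ, γ^∨⟩ = 0`. -/
theorem statement2 {I : Type} (G : KM.SGCM I) (Λ : I → ℝ) (hdom : ∀ i, 0 ≤ Λ i)
    (w : Equiv.Perm (I → ℝ)) (hw : G.IsCoMin Λ w) :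
    (∀ q ∈ Subgroup.closure {p : Equiv.Perm (I → ℝ) | ∃ i, Λ i = 0 ∧ p = G.srefl i},
        G.length w ≤ G.length (w * q)) ∧
    (∀ i : I, Λ i = 0 → G.length (w * G.srefl i) = G.length w + 1) := by
  classical
  obtain ⟨l, hlred, hlprod, hlmin⟩ : ∃ l : List I, G.IsReduced l ∧ G.wordProd l = w ∧
      (G.MinusculeWord Λ l ∨ G.dual.MinusculeWord Λ l) := by
    rcases hw with ⟨l, h1, h2, h3⟩ | ⟨l, h1, h2, h3⟩
    · exact ⟨l, h1, h2, Or.inl h3⟩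
    · exact ⟨l, h1, h2, Or.inr h3⟩
  subst hlprod
  have hmain := KM.S2.mainW G Λ hdom l hlmin
  have hlenW : (KM.S2.cox G).length ((KM.S2.cox G).wordProd l.reverse) = l.length := by
    apply le_antisymm
    · simpa using (KM.S2.cox G).length_wordProd_le l.reverse
    · exact hmain _ (fun j => rfl)
  have hlw : G.length (G.wordProd l) = l.length := by
    rw [KM.S2.length_transfer, hlenW]
  constructor
  · intro q hq
    obtain ⟨z, hzlet, hzprod⟩ : ∃ z : List I, (∀ j ∈ z, Λ j = 0) ∧ G.wordProd z = q := by
      induction hq using Subgroup.closure_induction with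
      | mem x hx =>
          obtain ⟨i0, hΛ0, rfl⟩ := hx
          exact ⟨[i0], by simpa using hΛ0, KM.S2.wp_singleton G i0⟩
      | one => exact ⟨[], by simp, rfl⟩
      | mul x y _ _ ihx ihy =>
          obtain ⟨z1, h1, h2⟩ := ihx
          obtain ⟨z2, h3, h4⟩ := ihy
          refine ⟨z1 ++ z2, ?_, by rw [KM.S2.wp_append, h2, h4]⟩
          intro j hj
          rcases List.mem_append.mp hj with h | h
          · exact h1 j h
          · exact h3 j h
      | inv x _ ihx =>
          obtain ⟨z1, h1, h2⟩ := ihx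
          exact ⟨z1.reverse, fun j hj => h1 j (List.mem_reverse.mp hj),
            by rw [KM.S2.wp_reverse, h2]⟩
    have h1 : G.length (G.wordProd l * q)
        = (KM.S2.cox G).length ((KM.S2.cox G).wordProd (l ++ z).reverse) := by
      rw [← hzprod, ← KM.S2.wp_append, KM.S2.length_transfer]
    have h2 : l.length ≤ (KM.S2.cox G).length
        ((KM.S2.cox G).wordProd (l ++ z).reverse) := by
      apply hmain
      intro j
      rw [KM.S2.cw_bridge, KM.S2.cw_bridge, KM.S2.wp_append, Equiv.Perm.mul_apply,
        KM.S2.wp_fix G Λ z hzlet]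
    rw [hlw, h1]
    exact h2
  · intro i hi
    have h1 : G.length (G.wordProd l * G.srefl i)
        = (KM.S2.cox G).length ((KM.S2.cox G).wordProd (l ++ [i]).reverse) := by
      rw [← KM.S2.wp_singleton, ← KM.S2.wp_append, KM.S2.length_transfer]
    have hfix : G.srefl i Λ = Λ := by
      funext j
      rw [KM.S2.srefl_apply, hi, zero_mul, sub_zero]
    have h2 : l.length ≤ (KM.S2.cox G).length
        ((KM.S2.cox G).wordProd (l ++ [i]).reverse) := by
      apply hmain
      intro j
      rw [KM.S2.cw_bridge, KM.S2.cw_bridge, KM.S2.wp_append, Equiv.Perm.mul_apply,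
        KM.S2.wp_singleton, hfix]
    have h3 : (KM.S2.cox G).wordProd (l ++ [i]).reverse
        = (KM.S2.cox G).simple i * (KM.S2.cox G).wordProd l.reverse := by
      rw [List.reverse_append, List.reverse_singleton, List.singleton_append,
        CoxeterSystem.wordProd_cons]
    rcases (KM.S2.cox G).length_simple_mul ((KM.S2.cox G).wordProd l.reverse) i
      with h4 | h4
    · rw [hlw, h1, h3, h4, hlenW]
    · exfalso
      rw [h3] at h2
      omega
end

section
/- Let Λ be a dominant weight, let x ∈ W be Λ-minuscule or Λ-cominuscule, S(x) = {α simple root : ⟨x(Λ), α^∨⟩ ≥ 0}, W_x the subgroup of W generated by {s_α : α ∈ S(x)}, and (W_x)^{Q_x} the set of elements w ∈ W_x of minimal length in their coset modulo the stabilizer of x(Λ) in W_x (equivalently, w(β) > 0 for every positive root β of the root subsystem generated by S(x) with ⟨x(Λ), β^∨⟩ = 0). Then for every w ∈ (W_x)^{Q_x}, the lengths are additive: ℓ(wx) = ℓ(w) + ℓ(x). -/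
theorem Equiv.Perm.apply_inv_self {α : Type*} (f : Equiv.Perm α) (x : α) : f (f⁻¹ x) = x :=
  Equiv.apply_symm_apply f x

theorem Equiv.Perm.inv_apply_self {α : Type*} (f : Equiv.Perm α) (x : α) : f⁻¹ (f x) = x :=
  Equiv.symm_apply_apply f x

namespace S7
open Finsupp List

variable {I : Type} (G : KM.SGCM I)

/-- Pairing of the root `α_s`-sum against `t`-th coroot row: `⟨Σ c_s α_s^∨, ·⟩`-style
coefficient `Ac t c = Σ_s c_s a(s,t)`. -/
def Ac (t : I) (c : I →₀ ℤ) : ℤ := c.sum fun s n => n * G.a s t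

@[simp] lemma Ac_zero (t : I) : Ac G t 0 = 0 := by simp [Ac]

lemma Ac_single (t s : I) (m : ℤ) : Ac G t (Finsupp.single s m) = m * G.a s t := by
  simp [Ac, Finsupp.sum_single_index]

lemma Ac_sub (t : I) (c c' : I →₀ ℤ) : Ac G t (c - c') = Ac G t c - Ac G t c' := by
  unfold Ac; exact Finsupp.sum_sub_index (fun a b₁ b₂ => by ring)

lemma Ac_add (t : I) (c c' : I →₀ ℤ) : Ac G t (c + c') = Ac G t c + Ac G t c' := by
  unfold Ac; exact Finsupp.sum_add_index' (fun a => by simp) (fun a b₁ b₂ => by ring)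

lemma Ac_smul (t : I) (p : ℤ) (c : I →₀ ℤ) : Ac G t (p • c) = p * Ac G t c := by
  unfold Ac
  rw [Finsupp.sum_smul_index (fun i => by simp), Finsupp.mul_sum]
  congr 1; funext a b; ring

lemma Ac_e (t s : I) : Ac G t (Finsupp.single s 1) = G.a s t := by
  rw [Ac_single]; ring

/-- reflection on the coroot lattice -/
noncomputable def crefFun (t : I) (c : I →₀ ℤ) : I →₀ ℤ := c - Finsupp.single t (Ac G t c)

lemma crefFun_inv (t : I) : Function.Involutive (crefFun G t) := by
  intro c
  unfold crefFun
  rw [Ac_sub, Ac_single, G.a_diag]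
  have h : Ac G t c - Ac G t c * 2 = -(Ac G t c) := by ring
  rw [h, Finsupp.single_neg]
  abel

noncomputable def cref (t : I) : Equiv.Perm (I →₀ ℤ) :=
  Function.Involutive.toPerm (crefFun G t) (crefFun_inv G t)

@[simp] lemma cref_apply (t : I) (c : I →₀ ℤ) :
    cref G t c = c - Finsupp.single t (Ac G t c) := rfl

@[simp] lemma srefl_apply (t : I) (lam : I → ℝ) (j : I) :
    G.srefl t lam j = lam j - lam t * (G.a j t : ℝ) := rfl

/-- big reflection on weights × coroots -/
noncomputable def Sg (t : I) : Equiv.Perm ((I → ℝ) × (I →₀ ℤ)) :=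
  (G.srefl t).prodCongr (cref G t)

noncomputable def bigP (l : List I) : Equiv.Perm ((I → ℝ) × (I →₀ ℤ)) :=
  (l.map (Sg G)).prod

noncomputable def cw (l : List I) : Equiv.Perm (I →₀ ℤ) :=
  (l.map (cref G)).prod

@[simp] lemma bigP_nil : bigP G [] = 1 := rfl
@[simp] lemma cw_nil : cw G [] = 1 := rfl
@[simp] lemma wp_nil : G.wordProd [] = 1 := rfl

lemma bigP_cons (t : I) (l : List I) : bigP G (t :: l) = Sg G t * bigP G l := by
  simp [bigP]

lemma cw_cons (t : I) (l : List I) : cw G (t :: l) = cref G t * cw G l := by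
  simp [cw]

lemma wp_cons (t : I) (l : List I) : G.wordProd (t :: l) = G.srefl t * G.wordProd l := by
  simp [KM.SGCM.wordProd]

lemma bigP_append (l m : List I) : bigP G (l ++ m) = bigP G l * bigP G m := by
  simp [bigP]

lemma cw_append (l m : List I) : cw G (l ++ m) = cw G l * cw G m := by
  simp [cw]

lemma wp_append (l m : List I) : G.wordProd (l ++ m) = G.wordProd l * G.wordProd m := by
  simp [KM.SGCM.wordProd]

lemma bigP_apply (l : List I) (x : (I → ℝ) × (I →₀ ℤ)) :
    bigP G l x = (G.wordProd l x.1, cw G l x.2) := by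
  induction l with
  | nil => simp
  | cons t l ih =>
    rw [bigP_cons, cw_cons, wp_cons, Equiv.Perm.mul_apply, ih]
    rfl

lemma srefl_invol (t : I) : G.srefl t * G.srefl t = 1 := by
  ext lam j
  simp only [Equiv.Perm.mul_apply, srefl_apply, Equiv.Perm.one_apply]
  have h2 : ((G.a t t : ℤ) : ℝ) = 2 := by rw [G.a_diag t]; norm_num
  rw [h2]; ring

@[simp] lemma Sg_apply (t : I) (x : (I → ℝ) × (I →₀ ℤ)) :
    Sg G t x = (G.srefl t x.1, cref G t x.2) := rfl

lemma srefl_srefl (t : I) (μ : I → ℝ) : G.srefl t (G.srefl t μ) = μ := by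
  funext j
  have h2 : ((G.a t t : ℤ) : ℝ) = 2 := by rw [G.a_diag t]; norm_num
  simp only [srefl_apply, h2]
  ring

lemma cref_cref (t : I) (c : I →₀ ℤ) : cref G t (cref G t c) = c := crefFun_inv G t c

lemma cref_invol (t : I) : cref G t * cref G t = 1 :=
  Equiv.ext fun c => cref_cref G t c

lemma Sg_invol (t : I) : Sg G t * Sg G t = 1 :=
  Equiv.ext fun x => by
    rw [Equiv.Perm.mul_apply, Sg_apply, Sg_apply]
    exact Prod.ext (srefl_srefl G t x.1) (cref_cref G t x.2)

end S7

namespace S7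
open Finsupp List

variable {I : Type} (G : KM.SGCM I)

/-! ### inverses and reverses -/

lemma Sg_inv (t : I) : (Sg G t)⁻¹ = Sg G t :=
  inv_eq_of_mul_eq_one_right (Sg_invol G t)

@[simp] lemma bigP_singleton (t : I) : bigP G [t] = Sg G t := by
  simp [bigP]

@[simp] lemma cw_singleton (t : I) : cw G [t] = cref G t := by
  simp [cw]

@[simp] lemma wp_singleton (t : I) : G.wordProd [t] = G.srefl t := by
  simp [KM.SGCM.wordProd]

lemma srefl_inv (t : I) : (G.srefl t)⁻¹ = G.srefl t :=
  inv_eq_of_mul_eq_one_right (srefl_invol G t)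

lemma cref_inv (t : I) : (cref G t)⁻¹ = cref G t :=
  inv_eq_of_mul_eq_one_right (cref_invol G t)

lemma bigP_reverse (l : List I) : bigP G l.reverse = (bigP G l)⁻¹ := by
  induction l with
  | nil => simp
  | cons t l ih =>
    rw [List.reverse_cons, bigP_append, ih, bigP_singleton, bigP_cons, mul_inv_rev, Sg_inv]

lemma wp_eq_fst (l : List I) (μ : I → ℝ) : G.wordProd l μ = (bigP G l (μ, 0)).1 := by
  rw [bigP_apply]

lemma cw_eq_snd (l : List I) (c : I →₀ ℤ) : cw G l c = (bigP G l (0, c)).2 := by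
  rw [bigP_apply]

lemma wp_reverse (l : List I) : G.wordProd l.reverse = (G.wordProd l)⁻¹ := by
  induction l with
  | nil => simp
  | cons t l ih =>
    rw [List.reverse_cons, wp_append, ih, wp_singleton, wp_cons, mul_inv_rev, srefl_inv]

lemma cw_reverse (l : List I) : cw G l.reverse = (cw G l)⁻¹ := by
  induction l with
  | nil => simp
  | cons t l ih =>
    rw [List.reverse_cons, cw_append, ih, cw_singleton, cw_cons, mul_inv_rev, cref_inv]

/-! ### length -/

noncomputable def len (W : Equiv.Perm ((I → ℝ) × (I →₀ ℤ))) : ℕ :=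
  sInf {n | ∃ l : List I, l.length = n ∧ bigP G l = W}

lemma len_le {W} {l : List I} (h : bigP G l = W) : len G W ≤ l.length :=
  Nat.sInf_le ⟨l, rfl, h⟩

lemma exists_min_word {W} (l : List I) (h : bigP G l = W) :
    ∃ m : List I, bigP G m = W ∧ m.length = len G W := by
  have hne : {n | ∃ l : List I, l.length = n ∧ bigP G l = W}.Nonempty := ⟨l.length, l, rfl, h⟩
  obtain ⟨m, hm1, hm2⟩ := Nat.sInf_mem hne
  exact ⟨m, hm2, hm1⟩

@[simp] lemma len_one : len G (1 : Equiv.Perm ((I → ℝ) × (I →₀ ℤ))) = 0 :=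
  Nat.le_zero.mp (len_le G (bigP_nil G))

lemma len_mul_word_le (l m : List I) :
    len G (bigP G l * bigP G m) ≤ len G (bigP G l) + m.length := by
  obtain ⟨lr, h1, h2⟩ := exists_min_word G l rfl
  calc len G (bigP G l * bigP G m) ≤ (lr ++ m).length := len_le G (by rw [bigP_append, h1])
    _ = len G (bigP G l) + m.length := by simp [h2]

lemma len_mul_S_le (l : List I) (t : I) :
    len G (bigP G l * Sg G t) ≤ len G (bigP G l) + 1 := by
  simpa using len_mul_word_le G l [t]

lemma len_le_mul_S (l : List I) (t : I) :
    len G (bigP G l) ≤ len G (bigP G l * Sg G t) + 1 := by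
  have h1 : bigP G l * Sg G t = bigP G (l ++ [t]) := by rw [bigP_append, bigP_singleton]
  have h2 : bigP G l = bigP G (l ++ [t]) * Sg G t := by
    rw [← h1, mul_assoc, Sg_invol, mul_one]
  calc len G (bigP G l) = len G (bigP G (l ++ [t]) * Sg G t) := by rw [← h2]
    _ ≤ len G (bigP G (l ++ [t])) + 1 := len_mul_S_le G (l ++ [t]) t
    _ = len G (bigP G l * Sg G t) + 1 := by rw [h1]

lemma len_zero_eq_one {W} (l : List I) (h : bigP G l = W) (h0 : len G W = 0) : W = 1 := by
  obtain ⟨m, hm, hlen⟩ := exists_min_word G l h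
  rw [h0, List.length_eq_zero_iff] at hlen
  rw [← hm, hlen, bigP_nil]

/-! ### pairing and the ν map -/

/-- pairing of a weight with a coroot -/
noncomputable def Pa (μ : I → ℝ) (c : I →₀ ℤ) : ℝ := c.sum fun s n => (n : ℝ) * μ s

@[simp] lemma Pa_zero (μ : I → ℝ) : Pa μ 0 = 0 := by simp [Pa]

lemma Pa_single (μ : I → ℝ) (s : I) (m : ℤ) : Pa μ (Finsupp.single s m) = m * μ s := by
  simp [Pa, Finsupp.sum_single_index]

lemma Pa_sub (μ : I → ℝ) (c c' : I →₀ ℤ) : Pa μ (c - c') = Pa μ c - Pa μ c' := by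
  unfold Pa
  rw [Finsupp.sum_sub_index (fun a b₁ b₂ => by push_cast; ring)]

lemma Pa_smul (μ : I → ℝ) (p : ℤ) (c : I →₀ ℤ) : Pa μ (p • c) = p * Pa μ c := by
  unfold Pa
  rw [Finsupp.sum_smul_index (fun i => by simp), Finsupp.mul_sum]
  congr 1; funext a b; push_cast; ring

lemma Pa_nonneg {μ : I → ℝ} {c : I →₀ ℤ} (hc : ∀ s, 0 ≤ c s)
    (hμ : ∀ s, c s ≠ 0 → 0 ≤ μ s) : 0 ≤ Pa μ c := by
  apply Finset.sum_nonneg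
  intro s hs
  have hcs : 0 ≤ c s := hc s
  have : c s ≠ 0 := Finsupp.mem_support_iff.mp hs
  have := hμ s this
  positivity

/-- The `W`-equivariant map from the coroot lattice to weights, `α_s^∨ ↦ d_s⁻¹ α_s`. -/
noncomputable def nu (c : I →₀ ℤ) : I → ℝ := fun k => c.sum fun s n => (n : ℝ) * (G.d s)⁻¹ * G.a k s

lemma nu_single (s : I) (m : ℤ) (k : I) :
    nu G (Finsupp.single s m) k = m * (G.d s)⁻¹ * G.a k s := by
  simp [nu, Finsupp.sum_single_index]

lemma nu_sub (c c' : I →₀ ℤ) (k : I) : nu G (c - c') k = nu G c k - nu G c' k := by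
  unfold nu
  rw [Finsupp.sum_sub_index (fun a b₁ b₂ => by push_cast; ring)]

lemma nu_apply_self (c : I →₀ ℤ) (t : I) : nu G c t = (G.d t)⁻¹ * Ac G t c := by
  unfold nu Ac
  rw [Finsupp.sum, Finsupp.sum, Int.cast_sum]
  rw [Finset.mul_sum]
  apply Finset.sum_congr rfl
  intro s _
  have hsy := G.symm t s
  have hds : (G.d s) ≠ 0 := ne_of_gt (G.d_pos s)
  have hdt : (G.d t) ≠ 0 := ne_of_gt (G.d_pos t)
  push_cast
  field_simp
  linear_combination ((c s : ℝ)) * hsy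

/-- equivariance of ν under a single reflection -/
lemma nu_equivariant (t : I) (c : I →₀ ℤ) :
    G.srefl t (nu G c) = nu G (cref G t c) := by
  funext k
  rw [cref_apply, nu_sub, nu_single, srefl_apply, nu_apply_self G c t]
  ring

/-- invariance of the pairing under a single reflection -/
lemma Pa_invariant_one (t : I) (μ : I → ℝ) (c : I →₀ ℤ) :
    Pa (G.srefl t μ) (cref G t c) = Pa μ c := by
  rw [cref_apply, Pa_sub, Pa_single, srefl_apply]
  have h2 : ((G.a t t : ℤ) : ℝ) = 2 := by rw [G.a_diag t]; norm_num
  rw [h2]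
  have : Pa (G.srefl t μ) c = Pa μ c - μ t * Ac G t c := by
    unfold Pa Ac
    rw [Finsupp.sum, Finsupp.sum, Finsupp.sum, Int.cast_sum, Finset.mul_sum,
      ← Finset.sum_sub_distrib]
    apply Finset.sum_congr rfl
    intro s _
    rw [srefl_apply]
    push_cast
    ring
  rw [this]
  ring

lemma Pa_invariant (l : List I) (μ : I → ℝ) (c : I →₀ ℤ) :
    Pa (G.wordProd l μ) (cw G l c) = Pa μ c := by
  induction l with
  | nil => simp [KM.SGCM.wordProd, cw]
  | cons t l ih =>
    rw [wp_cons, cw_cons, Equiv.Perm.mul_apply, Equiv.Perm.mul_apply, Pa_invariant_one, ih]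

lemma nu_equivariant_word (l : List I) (c : I →₀ ℤ) :
    G.wordProd l (nu G c) = nu G (cw G l c) := by
  induction l with
  | nil => simp [KM.SGCM.wordProd, cw]
  | cons t l ih =>
    rw [wp_cons, cw_cons, Equiv.Perm.mul_apply, Equiv.Perm.mul_apply, ih, nu_equivariant]

/-! ### linearity of the actions -/

lemma cref_add (t : I) (c c' : I →₀ ℤ) :
    cref G t (c + c') = cref G t c + cref G t c' := by
  simp only [cref_apply, Ac_add, Finsupp.single_add]
  abel

lemma cref_smul (t : I) (p : ℤ) (c : I →₀ ℤ) :
    cref G t (p • c) = p • cref G t c := by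
  simp only [cref_apply, Ac_smul, smul_sub, Finsupp.smul_single, smul_eq_mul]

lemma cw_add (l : List I) (c c' : I →₀ ℤ) :
    cw G l (c + c') = cw G l c + cw G l c' := by
  induction l with
  | nil => simp [cw]
  | cons t l ih => rw [cw_cons]; simp only [Equiv.Perm.mul_apply, ih, cref_add]

lemma cw_smul (l : List I) (p : ℤ) (c : I →₀ ℤ) :
    cw G l (p • c) = p • cw G l c := by
  induction l with
  | nil => simp [cw]
  | cons t l ih => rw [cw_cons]; simp only [Equiv.Perm.mul_apply, ih, cref_smul]

lemma cw_zero (l : List I) : cw G l 0 = 0 := by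
  have := cw_smul G l 0 0
  simpa using this

lemma cw_neg (l : List I) (c : I →₀ ℤ) : cw G l (-c) = - cw G l c := by
  have := cw_smul G l (-1) c
  simpa using this

/-- weight action is linear -/
lemma wp_linear (l : List I) (μ ν : I → ℝ) (t : ℝ) :
    G.wordProd l (fun k => μ k + t * ν k) = fun k => G.wordProd l μ k + t * G.wordProd l ν k := by
  induction l with
  | nil => simp [KM.SGCM.wordProd]
  | cons s l ih =>
    rw [wp_cons, Equiv.Perm.mul_apply, Equiv.Perm.mul_apply, Equiv.Perm.mul_apply, ih]
    funext k
    simp only [srefl_apply]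
    ring

lemma wp_smul (l : List I) (ν : I → ℝ) (t : ℝ) :
    G.wordProd l (fun k => t * ν k) = fun k => t * G.wordProd l ν k := by
  have h0 : G.wordProd l (fun _ => (0:ℝ)) = fun _ => (0:ℝ) := by
    induction l with
    | nil => simp [KM.SGCM.wordProd]
    | cons s l ih =>
      rw [wp_cons, Equiv.Perm.mul_apply, ih]
      funext k
      simp [srefl_apply]
  have := wp_linear G l (fun _ => (0:ℝ)) ν t
  simp only [zero_add] at this
  rw [this, h0]
  funext k
  simp

end S7

namespace S7
open Finsupp List

variable {I : Type} (G : KM.SGCM I)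

/-- the simple coroot -/
noncomputable def ee (t : I) : I →₀ ℤ := Finsupp.single t 1

/-- the simple root, as a weight -/
noncomputable def iota (G : KM.SGCM I) (t : I) : I → ℝ := fun k => ((G.a k t : ℤ) : ℝ)

lemma cw_sub (l : List I) (c c' : I →₀ ℤ) : cw G l (c - c') = cw G l c - cw G l c' := by
  have h := cw_add G l (c - c') c'
  rw [sub_add_cancel] at h
  rw [eq_sub_iff_add_eq, ← h]

lemma cw_single (l : List I) (t : I) (p : ℤ) :
    cw G l (Finsupp.single t p) = p • cw G l (ee t) := by
  rw [← cw_smul]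
  congr 1
  unfold ee
  rw [Finsupp.smul_single]
  norm_num

lemma Pa_nu_single (s : I) (c : I →₀ ℤ) :
    Pa (nu G (ee s)) c = (G.d s)⁻¹ * (Ac G s c : ℝ) := by
  unfold Pa Ac ee
  rw [Finsupp.sum, Finsupp.sum, Int.cast_sum, Finset.mul_sum]
  apply Finset.sum_congr rfl
  intro u _
  rw [nu_single]
  push_cast
  ring

lemma nu_ee_eq (s k : I) : nu G (ee s) k = (G.d s)⁻¹ * iota G s k := by
  unfold ee iota
  rw [nu_single]
  push_cast
  ring

/-! ### the conjugation lemma -/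

theorem conj_lemma (l : List I) (t₀ t₁ : I) (h : cw G l (ee t₀) = ee t₁) :
    bigP G l * Sg G t₀ * (bigP G l)⁻¹ = Sg G t₁ := by
  -- d-values agree
  have base : ∀ t : I, Pa (nu G (ee t)) (ee t) = 2 * (G.d t)⁻¹ := by
    intro t
    rw [Pa_nu_single]
    unfold ee
    rw [Ac_single, one_mul, G.a_diag]
    push_cast
    ring
  have hinv := Pa_invariant G l (nu G (ee t₀)) (ee t₀)
  rw [nu_equivariant_word, h] at hinv
  rw [base, base] at hinv
  have hd : G.d t₀ = G.d t₁ := by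
    have h1 : (2:ℝ) * (G.d t₁)⁻¹ = 2 * (G.d t₀)⁻¹ := hinv
    have h0 : G.d t₀ ≠ 0 := ne_of_gt (G.d_pos t₀)
    have h1' : G.d t₁ ≠ 0 := ne_of_gt (G.d_pos t₁)
    field_simp at h1
    linarith
  -- Ac transport
  have hAc : ∀ c : I →₀ ℤ, Ac G t₀ ((cw G l)⁻¹ c) = Ac G t₁ c := by
    intro c
    have h2 := Pa_invariant G l (nu G (ee t₀)) ((cw G l)⁻¹ c)
    rw [nu_equivariant_word, h, Equiv.Perm.apply_inv_self] at h2
    rw [Pa_nu_single, Pa_nu_single, hd] at h2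
    have h0 : (G.d t₁)⁻¹ ≠ 0 := inv_ne_zero (ne_of_gt (G.d_pos t₁))
    have := mul_left_cancel₀ h0 h2
    exact_mod_cast this.symm
  -- iota transport
  have hiota : G.wordProd l (iota G t₀) = iota G t₁ := by
    have h1 : iota G t₀ = fun k => G.d t₀ * nu G (ee t₀) k := by
      funext k
      rw [nu_ee_eq]
      have h0 : G.d t₀ ≠ 0 := ne_of_gt (G.d_pos t₀)
      field_simp
    rw [h1, wp_smul, nu_equivariant_word, h]
    funext k
    rw [nu_ee_eq, hd]
    have h0 : G.d t₁ ≠ 0 := ne_of_gt (G.d_pos t₁)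
    field_simp
  -- coordinate transport
  have hcoord : ∀ μ : I → ℝ, ((G.wordProd l)⁻¹ μ) t₀ = μ t₁ := by
    intro μ
    have h1 := Pa_invariant G l ((G.wordProd l)⁻¹ μ) (ee t₀)
    rw [Equiv.Perm.apply_inv_self, h] at h1
    unfold ee at h1
    rw [Pa_single, Pa_single] at h1
    simpa using h1.symm
  -- assemble
  apply Equiv.ext
  intro x
  have hinvP : (bigP G l)⁻¹ x = ((G.wordProd l)⁻¹ x.1, (cw G l)⁻¹ x.2) := by
    rw [← bigP_reverse, bigP_apply, wp_reverse, cw_reverse]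
  rw [Equiv.Perm.mul_apply, Equiv.Perm.mul_apply, hinvP, Sg_apply, bigP_apply]
  simp only
  apply Prod.ext
  · -- weight component
    show G.wordProd l (G.srefl t₀ ((G.wordProd l)⁻¹ x.1)) = (Sg G t₁ x).1
    have hsr : G.srefl t₀ ((G.wordProd l)⁻¹ x.1)
        = fun k => ((G.wordProd l)⁻¹ x.1) k + (-(x.1 t₁)) * iota G t₀ k := by
      funext k
      rw [srefl_apply, hcoord]
      unfold iota
      ring
    rw [hsr, wp_linear, Sg_apply]
    simp only
    funext k
    rw [congrFun (hiota) k]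
    have : G.wordProd l ((G.wordProd l)⁻¹ x.1) = x.1 := Equiv.Perm.apply_inv_self _ _
    rw [congrFun this k, srefl_apply]
    unfold iota
    ring
  · -- coroot component
    show cw G l (cref G t₀ ((cw G l)⁻¹ x.2)) = (Sg G t₁ x).2
    rw [cref_apply, cw_sub, Equiv.Perm.apply_inv_self, cw_single, hAc, Sg_apply]
    simp only
    rw [cref_apply]
    congr 1
    rw [h]
    unfold ee
    rw [Finsupp.smul_single, smul_eq_mul, mul_one]

end S7

namespace S7
open Finsupp List

variable {I : Type} (G : KM.SGCM I)

lemma cw_nil_apply (c : I →₀ ℤ) : cw G [] c = c := rfl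

lemma cw_cons_apply (t : I) (l : List I) (c : I →₀ ℤ) :
    cw G (t :: l) c = cref G t (cw G l c) := by
  rw [cw_cons]; rfl

lemma bigP_eq_cw_eq {l l' : List I} (h : bigP G l = bigP G l') (c : I →₀ ℤ) :
    cw G l c = cw G l' c := by
  rw [cw_eq_snd, cw_eq_snd, h]

lemma bigP_eq_wp_eq {l l' : List I} (h : bigP G l = bigP G l') :
    G.wordProd l = G.wordProd l' := by
  ext μ : 1
  rw [wp_eq_fst, wp_eq_fst, h]

/-! ### rank two computations -/

variable (i j : I)

lemma two_congr {p p' q q' : ℤ} (h1 : p = p') (h2 : q = q') :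
    (Finsupp.single i p + Finsupp.single j q : I →₀ ℤ)
      = Finsupp.single i p' + Finsupp.single j q' := by rw [h1, h2]

lemma ee_two_i : (ee i : I →₀ ℤ) = Finsupp.single i 1 + Finsupp.single j 0 := by
  simp [ee]

lemma ee_two_j : (ee j : I →₀ ℤ) = Finsupp.single i 0 + Finsupp.single j 1 := by
  simp [ee]

lemma cref_two_left (hij : i ≠ j) (p q : ℤ) :
    cref G i (Finsupp.single i p + Finsupp.single j q)
      = Finsupp.single i (-p - G.a j i * q) + Finsupp.single j q := by
  rw [cref_apply, Ac_add, Ac_single, Ac_single, G.a_diag]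
  have h : (Finsupp.single i (-p - G.a j i * q) : I →₀ ℤ)
      = Finsupp.single i p - Finsupp.single i (p * 2 + q * G.a j i) := by
    rw [← Finsupp.single_sub]
    congr 1
    ring
  rw [h]
  abel

lemma cref_two_right (hij : i ≠ j) (p q : ℤ) :
    cref G j (Finsupp.single i p + Finsupp.single j q)
      = Finsupp.single i p + Finsupp.single j (-q - G.a i j * p) := by
  rw [cref_apply, Ac_add, Ac_single, Ac_single, G.a_diag]
  have h : (Finsupp.single j (-q - G.a i j * p) : I →₀ ℤ)
      = Finsupp.single j q - Finsupp.single j (p * G.a i j + q * 2) := by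
    rw [← Finsupp.single_sub]
    congr 1
    ring
  rw [h]
  abel

lemma two_apply_i (hij : i ≠ j) (p q : ℤ) :
    (Finsupp.single i p + Finsupp.single j q : I →₀ ℤ) i = p := by
  rw [Finsupp.add_apply, Finsupp.single_eq_same, Finsupp.single_eq_of_ne' (Ne.symm hij)]
  ring

lemma two_apply_j (hij : i ≠ j) (p q : ℤ) :
    (Finsupp.single i p + Finsupp.single j q : I →₀ ℤ) j = q := by
  rw [Finsupp.add_apply, Finsupp.single_eq_same, Finsupp.single_eq_of_ne' hij]
  ring

lemma two_apply_other (s : I) (hsi : s ≠ i) (hsj : s ≠ j) (p q : ℤ) :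
    (Finsupp.single i p + Finsupp.single j q : I →₀ ℤ) s = 0 := by
  rw [Finsupp.add_apply, Finsupp.single_eq_of_ne' (Ne.symm hsi), Finsupp.single_eq_of_ne' (Ne.symm hsj)]
  ring

/-! ### alternating words -/

def alt (u v : I) : ℕ → List I
  | 0 => []
  | (k+1) => (if Even k then u else v) :: alt u v k

@[simp] lemma alt_zero (u v : I) : alt u v 0 = [] := rfl

lemma alt_succ (u v : I) (k : ℕ) :
    alt u v (k+1) = (if Even k then u else v) :: alt u v k := rfl

@[simp] lemma length_alt (u v : I) (k : ℕ) : (alt u v k).length = k := by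
  induction k with
  | zero => rfl
  | succ k ih => rw [alt_succ]; simp [ih]

lemma ite_parity (u v : I) (k : ℕ) :
    (if Even (k+1) then u else v) = (if Even k then v else u) := by
  rcases Nat.even_or_odd k with h | h
  · simp [h, Nat.even_add_one]
  · simp [Nat.not_even_iff_odd.mpr h, Nat.even_add_one]

lemma alt_snoc (u v : I) (k : ℕ) : alt u v (k+1) = alt v u k ++ [u] := by
  induction k with
  | zero => rfl
  | succ k ih =>
    rw [alt_succ u v (k+1), ih, ite_parity u v k, alt_succ v u k]
    rfl

lemma alt_suffix (u v : I) (M d : ℕ) :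
    ∃ pre : List I, alt u v (M + d) = pre ++ alt u v M ∧ pre.length = d := by
  induction d with
  | zero => exact ⟨[], by simp, rfl⟩
  | succ d ih =>
    obtain ⟨pre, h1, h2⟩ := ih
    refine ⟨(if Even (M + d) then u else v) :: pre, ?_, by simp [h2]⟩
    rw [show M + (d+1) = (M + d) + 1 from rfl, alt_succ, h1]
    rfl

/-! ### normal form for dihedral words -/

lemma nf_step (u v : I) (huv : u ≠ v) (a : I) (ha : a = u ∨ a = v) (k : ℕ) :
    ∃ k', k' ≤ k + 1 ∧ (Sg G a * bigP G (alt u v k) = bigP G (alt u v k')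
      ∨ Sg G a * bigP G (alt u v k) = bigP G (alt v u k')) := by
  cases k with
  | zero =>
    rcases ha with ha | ha
    · exact ⟨1, by norm_num, Or.inl (by rw [ha]; simp [alt_succ])⟩
    · exact ⟨1, by norm_num, Or.inr (by rw [ha]; simp [alt_succ])⟩
  | succ k =>
    have hc2 : alt u v (k+2) = (if Even (k+1) then u else v) :: alt u v (k+1) := rfl
    have hc1 : alt u v (k+1) = (if Even k then u else v) :: alt u v k := rfl
    rcases Nat.even_or_odd k with hk | hk
    · -- head of alt u v (k+1) is u, next letter is v
      have e1 : (if Even k then u else v) = u := by simp [hk]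
      have e2 : (if Even (k+1) then u else v) = v := by
        simp [Nat.even_add_one, hk]
      rcases ha with ha | ha
      · -- a = u = head: cancel
        refine ⟨k, by omega, Or.inl ?_⟩
        rw [hc1, e1, bigP_cons, ha, ← mul_assoc, Sg_invol, one_mul]
      · -- a = v = next: extend
        refine ⟨k + 2, le_refl _, Or.inl ?_⟩
        rw [hc2, e2, bigP_cons, ha]
    · -- head is v, next letter is u
      have e1 : (if Even k then u else v) = v := by simp [Nat.not_even_iff_odd.mpr hk]
      have e2 : (if Even (k+1) then u else v) = u := by
        simp [Nat.even_add_one, Nat.not_even_iff_odd.mpr hk]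
      rcases ha with ha | ha
      · refine ⟨k + 2, le_refl _, Or.inl ?_⟩
        rw [hc2, e2, bigP_cons, ha]
      · refine ⟨k, by omega, Or.inl ?_⟩
        rw [hc1, e1, bigP_cons, ha, ← mul_assoc, Sg_invol, one_mul]

lemma normal_form (hij : i ≠ j) (m : List I) (hm : ∀ t ∈ m, t = i ∨ t = j) :
    ∃ k, k ≤ m.length ∧ (bigP G m = bigP G (alt j i k) ∨ bigP G m = bigP G (alt i j k)) := by
  induction m with
  | nil => exact ⟨0, le_refl _, Or.inl (by simp)⟩
  | cons a m ih =>
    obtain ⟨k, hk, hcase⟩ := ih (fun t ht => hm t (List.mem_cons_of_mem a ht))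
    have ha := hm a (List.mem_cons_self (a := a) (l := m))
    rcases hcase with hE | hF
    · obtain ⟨k', hk', hres⟩ := nf_step G j i (Ne.symm hij) a (ha.symm) k
      rcases hres with h | h
      · exact ⟨k', by simp; omega, Or.inl (by rw [bigP_cons, hE, h])⟩
      · exact ⟨k', by simp; omega, Or.inr (by rw [bigP_cons, hE, h])⟩
    · obtain ⟨k', hk', hres⟩ := nf_step G i j hij a ha k
      rcases hres with h | h
      · exact ⟨k', by simp; omega, Or.inr (by rw [bigP_cons, hF, h])⟩
      · exact ⟨k', by simp; omega, Or.inl (by rw [bigP_cons, hF, h])⟩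

end S7

namespace S7
open Finsupp List

variable {I : Type} (G : KM.SGCM I) (i j : I)

lemma alt_one (u v : I) : alt u v 1 = [u] := by
  rw [alt_succ, if_pos (by decide : Even 0), alt_zero]
lemma alt_two (u v : I) : alt u v 2 = [v, u] := by
  rw [alt_succ, if_neg (by decide : ¬ Even 1), alt_one]
lemma alt_three (u v : I) : alt u v 3 = [u, v, u] := by
  rw [alt_succ, if_pos (by decide : Even 2), alt_two]
lemma alt_four (u v : I) : alt u v 4 = [v, u, v, u] := by
  rw [alt_succ, if_neg (by decide : ¬ Even 3), alt_three]
lemma alt_five (u v : I) : alt u v 5 = [u, v, u, v, u] := by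
  rw [alt_succ, if_pos (by decide : Even 4), alt_four]
lemma alt_six (u v : I) : alt u v 6 = [v, u, v, u, v, u] := by
  rw [alt_succ, if_neg (by decide : ¬ Even 5), alt_five]

lemma conj_shift (l : List I) (t t' : I) (h : cw G l (ee t) = ee t') :
    bigP G (l ++ [t]) = bigP G (t' :: l) := by
  have hc := conj_lemma G l t t' h
  rw [bigP_append, bigP_singleton, bigP_cons]
  calc bigP G l * Sg G t = (bigP G l * Sg G t * (bigP G l)⁻¹) * bigP G l := by group
    _ = Sg G t' * bigP G l := by rw [hc]

/-! ### braid relations -/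

lemma braid_two (hij : i ≠ j) (h : G.a i j * G.a j i = 0) :
    bigP G (alt j i 2) = bigP G (alt i j 2) := by
  have hz : G.a j i = 0 := by
    rcases mul_eq_zero.mp h with h' | h'
    · exact G.a_zero_iff i j h'
    · exact h'
  have hc : cw G [i] (ee j) = ee j := by
    rw [cw_singleton, ee_two_j i j, cref_two_left G i j hij]
    exact two_congr i j (by rw [hz]; ring) rfl
  have hs := conj_shift G [i] j j hc
  rw [alt_two, alt_two]
  exact hs

lemma braid_three (hij : i ≠ j) (h : G.a i j * G.a j i = 1) :
    bigP G (alt j i 3) = bigP G (alt i j 3) := by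
  obtain ⟨hb, hc⟩ : G.a i j = -1 ∧ G.a j i = -1 := by
    rcases Int.mul_eq_one_iff_eq_one_or_neg_one.mp h with ⟨h1, h2⟩ | ⟨h1, h2⟩
    · exfalso; have := G.a_offdiag i j hij; omega
    · exact ⟨h1, h2⟩
  have hcw : cw G [i, j] (ee i) = ee j := by
    rw [cw_cons_apply, cw_cons_apply, cw_nil_apply, ee_two_i i j,
      cref_two_right G i j hij, cref_two_left G i j hij, ee_two_j i j]
    exact two_congr i j (by rw [hb, hc]; ring) (by rw [hb]; ring)
  have hs := conj_shift G [i, j] i j hcw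
  rw [alt_three, alt_three]
  exact hs.symm

lemma braid_four (hij : i ≠ j) (h : G.a i j * G.a j i = 2) :
    bigP G (alt j i 4) = bigP G (alt i j 4) := by
  have hcw : cw G [j, i, j] (ee i) = ee i := by
    rw [cw_cons_apply, cw_cons_apply, cw_cons_apply, cw_nil_apply, ee_two_i i j,
      cref_two_right G i j hij, cref_two_left G i j hij, cref_two_right G i j hij]
    exact two_congr i j (by linear_combination h) (by linear_combination (-(G.a i j)) * h)
  have hs := conj_shift G [j, i, j] i i hcw
  rw [alt_four, alt_four]
  exact hs.symm

lemma braid_six (hij : i ≠ j) (h : G.a i j * G.a j i = 3) :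
    bigP G (alt j i 6) = bigP G (alt i j 6) := by
  have hcw : cw G [i, j, i, j, i] (ee j) = ee j := by
    rw [cw_cons_apply, cw_cons_apply, cw_cons_apply, cw_cons_apply, cw_cons_apply,
      cw_nil_apply, ee_two_j i j,
      cref_two_left G i j hij, cref_two_right G i j hij, cref_two_left G i j hij,
      cref_two_right G i j hij, cref_two_left G i j hij]
    refine two_congr i j ?_ ?_
    · linear_combination (-(G.a j i) * (G.a i j * G.a j i - 1)) * h
    · linear_combination (G.a i j * G.a j i) * h
  have hs := conj_shift G [i, j, i, j, i] j j hcw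
  rw [alt_six, alt_six]
  exact hs

/-! ### positivity in rank two -/

lemma pos4 (hij : i ≠ j) (h4 : 4 ≤ G.a i j * G.a j i) :
    ∀ k, 1 ≤ k → ∃ p q : ℤ, 1 ≤ p ∧ 1 ≤ q ∧
      cw G (alt j i k) (ee i) = Finsupp.single i p + Finsupp.single j q ∧
      (¬ Even k → (-(G.a i j)) * p ≤ 2 * q) ∧ (Even k → (-(G.a j i)) * q ≤ 2 * p) := by
  have hb := G.a_offdiag i j hij
  have hc := G.a_offdiag j i (Ne.symm hij)
  have hb1 : G.a i j ≤ -1 := by nlinarith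
  have hc1 : G.a j i ≤ -1 := by nlinarith
  intro k
  induction k with
  | zero => omega
  | succ k ih =>
    intro _
    by_cases hk0 : k = 0
    · subst hk0
      refine ⟨1, -(G.a i j), le_refl _, by linarith, ?_, ?_, ?_⟩
      · rw [alt_one, cw_cons_apply, cw_nil_apply, ee_two_i i j, cref_two_right G i j hij]
        exact two_congr i j rfl (by ring)
      · intro _; linarith
      · intro hcontr; exact absurd hcontr (by simp)
    · have hk1 : 1 ≤ k := by omega
      obtain ⟨p, q, hp, hq, hval, hodd, heven⟩ := ih hk1
      rcases Nat.even_or_odd k with he | ho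
      · have hinv := heven he
        have key : 2*q ≤ (-(G.a i j)) * p := by
          nlinarith [mul_le_mul_of_nonneg_left hinv (by linarith : (0:ℤ) ≤ -G.a i j),
            mul_nonneg (by linarith : (0:ℤ) ≤ G.a i j * G.a j i - 4) (by linarith : (0:ℤ) ≤ q)]
        refine ⟨p, -q - G.a i j * p, hp, by linarith, ?_, ?_, ?_⟩
        · rw [alt_succ, if_pos he, cw_cons_apply, hval, cref_two_right G i j hij]
        · intro _; linarith
        · intro hcontr
          exact absurd hcontr (by simp [Nat.even_add_one, he])
      · have hinv := hodd (Nat.not_even_iff_odd.mpr ho)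
        have key : 2*p ≤ (-(G.a j i)) * q := by
          nlinarith [mul_le_mul_of_nonneg_left hinv (by linarith : (0:ℤ) ≤ -G.a j i),
            mul_nonneg (by linarith : (0:ℤ) ≤ G.a i j * G.a j i - 4) (by linarith : (0:ℤ) ≤ p)]
        refine ⟨-p - G.a j i * q, q, by linarith, hq, ?_, ?_, ?_⟩
        · rw [alt_succ, if_neg (by simpa using Nat.not_even_iff_odd.mpr ho), cw_cons_apply, hval,
            cref_two_left G i j hij]
        · intro hcontr
          exact absurd (Nat.even_add_one.mpr (Nat.not_even_iff_odd.mpr ho)) hcontr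
        · intro _; linarith

/-! ### small cases -/

lemma hsmall2 (hij : i ≠ j) (k : ℕ) (h1 : 1 ≤ k) (h2 : k < 2) :
    ∃ p q : ℤ, 0 ≤ p ∧ 0 ≤ q ∧
      cw G (alt j i k) (ee i) = Finsupp.single i p + Finsupp.single j q := by
  have hb := G.a_offdiag i j hij
  interval_cases k
  exact ⟨1, -(G.a i j), by norm_num, by linarith, by
    rw [alt_one, cw_cons_apply, cw_nil_apply, ee_two_i i j, cref_two_right G i j hij]
    exact two_congr i j rfl (by ring)⟩

lemma hsmall3 (hij : i ≠ j) (h : G.a i j * G.a j i = 1) (k : ℕ) (h1 : 1 ≤ k) (h2 : k < 3) :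
    ∃ p q : ℤ, 0 ≤ p ∧ 0 ≤ q ∧
      cw G (alt j i k) (ee i) = Finsupp.single i p + Finsupp.single j q := by
  have hb := G.a_offdiag i j hij
  interval_cases k
  · exact ⟨1, -(G.a i j), by norm_num, by linarith, by
      rw [alt_one, cw_cons_apply, cw_nil_apply, ee_two_i i j, cref_two_right G i j hij]
      exact two_congr i j rfl (by ring)⟩
  · exact ⟨0, -(G.a i j), le_refl _, by linarith, by
      rw [alt_two, cw_cons_apply, cw_cons_apply, cw_nil_apply, ee_two_i i j,
        cref_two_right G i j hij, cref_two_left G i j hij]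
      exact two_congr i j (by linear_combination h) (by ring)⟩

lemma hsmall4 (hij : i ≠ j) (h : G.a i j * G.a j i = 2) (k : ℕ) (h1 : 1 ≤ k) (h2 : k < 4) :
    ∃ p q : ℤ, 0 ≤ p ∧ 0 ≤ q ∧
      cw G (alt j i k) (ee i) = Finsupp.single i p + Finsupp.single j q := by
  have hb := G.a_offdiag i j hij
  interval_cases k
  · exact ⟨1, -(G.a i j), by norm_num, by linarith, by
      rw [alt_one, cw_cons_apply, cw_nil_apply, ee_two_i i j, cref_two_right G i j hij]
      exact two_congr i j rfl (by ring)⟩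
  · exact ⟨1, -(G.a i j), by norm_num, by linarith, by
      rw [alt_two, cw_cons_apply, cw_cons_apply, cw_nil_apply, ee_two_i i j,
        cref_two_right G i j hij, cref_two_left G i j hij]
      exact two_congr i j (by linear_combination h) (by ring)⟩
  · exact ⟨1, 0, by norm_num, le_refl _, by
      rw [alt_three, cw_cons_apply, cw_cons_apply, cw_cons_apply, cw_nil_apply, ee_two_i i j,
        cref_two_right G i j hij, cref_two_left G i j hij, cref_two_right G i j hij]
      exact two_congr i j (by linear_combination h) (by linear_combination (-(G.a i j)) * h)⟩

lemma hsmall6 (hij : i ≠ j) (h : G.a i j * G.a j i = 3) (k : ℕ) (h1 : 1 ≤ k) (h2 : k < 6) :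
    ∃ p q : ℤ, 0 ≤ p ∧ 0 ≤ q ∧
      cw G (alt j i k) (ee i) = Finsupp.single i p + Finsupp.single j q := by
  have hb := G.a_offdiag i j hij
  interval_cases k
  · exact ⟨1, -(G.a i j), by norm_num, by linarith, by
      rw [alt_one, cw_cons_apply, cw_nil_apply, ee_two_i i j, cref_two_right G i j hij]
      exact two_congr i j rfl (by ring)⟩
  · exact ⟨2, -(G.a i j), by norm_num, by linarith, by
      rw [alt_two, cw_cons_apply, cw_cons_apply, cw_nil_apply, ee_two_i i j,
        cref_two_right G i j hij, cref_two_left G i j hij]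
      exact two_congr i j (by linear_combination h) (by ring)⟩
  · exact ⟨2, -(G.a i j), by norm_num, by linarith, by
      rw [alt_three, cw_cons_apply, cw_cons_apply, cw_cons_apply, cw_nil_apply, ee_two_i i j,
        cref_two_right G i j hij, cref_two_left G i j hij, cref_two_right G i j hij]
      exact two_congr i j (by linear_combination h) (by linear_combination (-(G.a i j)) * h)⟩
  · exact ⟨1, -(G.a i j), by norm_num, by linarith, by
      rw [alt_four, cw_cons_apply, cw_cons_apply, cw_cons_apply, cw_cons_apply, cw_nil_apply,
        ee_two_i i j, cref_two_right G i j hij, cref_two_left G i j hij,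
        cref_two_right G i j hij, cref_two_left G i j hij]
      exact two_congr i j (by linear_combination (G.a i j * G.a j i) * h)
        (by linear_combination (-(G.a i j)) * h)⟩
  · exact ⟨1, 0, by norm_num, le_refl _, by
      rw [alt_five, cw_cons_apply, cw_cons_apply, cw_cons_apply, cw_cons_apply, cw_cons_apply,
        cw_nil_apply, ee_two_i i j, cref_two_right G i j hij, cref_two_left G i j hij,
        cref_two_right G i j hij, cref_two_left G i j hij, cref_two_right G i j hij]
      exact two_congr i j (by linear_combination (G.a i j * G.a j i) * h)
        (by linear_combination (-(G.a i j) * (G.a i j * G.a j i - 1)) * h)⟩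

/-! ### the dihedral lemma -/

lemma finite_case (hij : i ≠ j) (M : ℕ) (hM1 : 1 ≤ M)
    (hbraid : bigP G (alt j i M) = bigP G (alt i j M))
    (hsmall : ∀ k, 1 ≤ k → k < M → ∃ p q : ℤ, 0 ≤ p ∧ 0 ≤ q ∧
        cw G (alt j i k) (ee i) = Finsupp.single i p + Finsupp.single j q)
    (k : ℕ) (hk1 : 1 ≤ k) :
    (∃ p q : ℤ, 0 ≤ p ∧ 0 ≤ q ∧
        cw G (alt j i k) (ee i) = Finsupp.single i p + Finsupp.single j q) ∨
    (∃ m' : List I, m'.length + 1 ≤ k ∧ bigP G m' = bigP G (alt j i k) * Sg G i) := by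
  by_cases hkM : k < M
  · exact Or.inl (hsmall k hk1 hkM)
  · right
    push_neg at hkM
    obtain ⟨pre, hpre, hlen⟩ := alt_suffix j i M (k - M)
    have hMk : M + (k - M) = k := by omega
    rw [hMk] at hpre
    obtain ⟨M', rfl⟩ : ∃ M', M = M' + 1 := ⟨M - 1, by omega⟩
    have hsnoc : alt i j (M' + 1) = alt j i M' ++ [i] := alt_snoc i j M'
    refine ⟨pre ++ alt j i M', ?_, ?_⟩
    · rw [List.length_append, hlen, length_alt]; omega
    · have key : bigP G (alt j i k) * Sg G i = bigP G pre * bigP G (alt j i M') := by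
        rw [hpre, bigP_append, hbraid, hsnoc, bigP_append, bigP_singleton,
          mul_assoc, mul_assoc, Sg_invol, mul_one]
      rw [bigP_append, key]

theorem dihedral (hij : i ≠ j) (m : List I) (hm : ∀ t ∈ m, t = i ∨ t = j) :
    (∃ p q : ℤ, 0 ≤ p ∧ 0 ≤ q ∧
        cw G m (ee i) = Finsupp.single i p + Finsupp.single j q) ∨
    (∃ m' : List I, m'.length < m.length ∧ bigP G m' = bigP G m * Sg G i) := by
  obtain ⟨k, hk, hEF⟩ := normal_form G i j hij m hm
  have trivial_case : bigP G m = bigP G (alt j i 0) ∨ bigP G m = bigP G (alt i j 0) →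
      (∃ p q : ℤ, 0 ≤ p ∧ 0 ≤ q ∧
        cw G m (ee i) = Finsupp.single i p + Finsupp.single j q) := by
    intro h0
    have h1 : bigP G m = bigP G ([] : List I) := by
      rcases h0 with h0 | h0 <;> simpa using h0
    refine ⟨1, 0, by norm_num, le_refl _, ?_⟩
    rw [bigP_eq_cw_eq G h1, cw_nil_apply, ee_two_i i j]
  rcases hEF with hE | hF
  · -- E-case : ends with j (or empty)
    rcases Nat.eq_zero_or_pos k with rfl | hk1
    · exact Or.inl (trivial_case (Or.inl hE))
    have hb := G.a_offdiag i j hij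
    have hc := G.a_offdiag j i (Ne.symm hij)
    have hnn : 0 ≤ G.a i j * G.a j i := by nlinarith [mul_nonneg (neg_nonneg.2 hb) (neg_nonneg.2 hc)]
    by_cases h4 : 4 ≤ G.a i j * G.a j i
    · obtain ⟨p, q, hp, hq, hval, _, _⟩ := pos4 G i j hij h4 k hk1
      exact Or.inl ⟨p, q, by linarith, by linarith, by rw [bigP_eq_cw_eq G hE]; exact hval⟩
    · push_neg at h4
      have hcase : G.a i j * G.a j i = 0 ∨ G.a i j * G.a j i = 1 ∨
          G.a i j * G.a j i = 2 ∨ G.a i j * G.a j i = 3 := by omega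
      have main : (∃ p q : ℤ, 0 ≤ p ∧ 0 ≤ q ∧
          cw G (alt j i k) (ee i) = Finsupp.single i p + Finsupp.single j q) ∨
          (∃ m' : List I, m'.length + 1 ≤ k ∧ bigP G m' = bigP G (alt j i k) * Sg G i) := by
        rcases hcase with h | h | h | h
        · exact finite_case G i j hij 2 (by norm_num) (braid_two G i j hij h)
            (hsmall2 G i j hij) k hk1
        · exact finite_case G i j hij 3 (by norm_num) (braid_three G i j hij h)
            (hsmall3 G i j hij h) k hk1
        · exact finite_case G i j hij 4 (by norm_num) (braid_four G i j hij h)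
            (hsmall4 G i j hij h) k hk1
        · exact finite_case G i j hij 6 (by norm_num) (braid_six G i j hij h)
            (hsmall6 G i j hij h) k hk1
      rcases main with ⟨p, q, hp, hq, hval⟩ | ⟨m', hm', hval⟩
      · exact Or.inl ⟨p, q, hp, hq, by rw [bigP_eq_cw_eq G hE]; exact hval⟩
      · exact Or.inr ⟨m', by omega, by rw [hval, hE]⟩
  · -- F-case : ends with i (or empty)
    rcases Nat.eq_zero_or_pos k with rfl | hk1
    · exact Or.inl (trivial_case (Or.inr hF))
    obtain ⟨k', rfl⟩ : ∃ k', k = k' + 1 := ⟨k - 1, by omega⟩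
    refine Or.inr ⟨alt j i k', by rw [length_alt]; omega, ?_⟩
    rw [hF, alt_snoc i j k', bigP_append, bigP_singleton, mul_assoc, Sg_invol, mul_one]

end S7

namespace S7
open Finsupp List

variable {I : Type} (G : KM.SGCM I)

lemma ee_nonneg (t s : I) : 0 ≤ ee t s := by
  unfold ee
  rcases eq_or_ne t s with h | h
  · rw [h, Finsupp.single_eq_same]; norm_num
  · rw [Finsupp.single_eq_of_ne' h]

lemma cw_append_apply (l m : List I) (c : I →₀ ℤ) :
    cw G (l ++ m) c = cw G l (cw G m c) := by
  rw [cw_append]; rfl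

lemma cw_ee_ne_zero (l : List I) (t : I) : cw G l (ee t) ≠ 0 := by
  intro h
  have h2 := congrArg (cw G l.reverse) h
  rw [cw_reverse, Equiv.Perm.inv_apply_self, ← cw_reverse, cw_zero] at h2
  exact one_ne_zero (Finsupp.single_eq_zero.mp h2)

theorem posQ_aux : ∀ n : ℕ, ∀ l : List I, ∀ t : I, len G (bigP G l) = n →
    len G (bigP G l) ≤ len G (bigP G l * Sg G t) → ∀ s, 0 ≤ cw G l (ee t) s := by
  intro n
  induction n using Nat.strong_induction_on with
  | _ n IH =>
    intro l t hn hle s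
    rcases Nat.eq_zero_or_pos n with rfl | hpos
    · -- identity
      have h1 : bigP G l = 1 := len_zero_eq_one G l rfl hn
      have h2 : cw G l (ee t) = ee t := by
        have := bigP_eq_cw_eq G (h1.trans (bigP_nil G).symm) (ee t)
        rwa [cw_nil_apply] at this
      rw [h2]; exact ee_nonneg t s
    -- main case
    obtain ⟨n', rfl⟩ : ∃ n', n = n' + 1 := ⟨n - 1, by omega⟩
    obtain ⟨lr, hlr, hlen⟩ := exists_min_word G l rfl
    have hlr_ne : lr ≠ [] := by
      intro h'
      rw [h', bigP_nil] at hlr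
      rw [← hlr, len_one] at hn
      omega
    set j := lr.getLast hlr_ne with hj
    have hdecomp : lr.dropLast ++ [j] = lr := List.dropLast_append_getLast hlr_ne
    have hlsj : bigP G l * Sg G j = bigP G lr.dropLast := by
      have hstep : bigP G lr = bigP G lr.dropLast * Sg G j := by
        conv_lhs => rw [← hdecomp]
        rw [bigP_append, bigP_singleton]
      rw [← hlr, hstep, mul_assoc, Sg_invol, mul_one]
    have hlen_dl : lr.dropLast.length = n' := by
      have h1 : lr.dropLast.length + 1 = lr.length := by
        conv_rhs => rw [← hdecomp]
        simp
      omega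
    have hlen_wsj : len G (bigP G l * Sg G j) = n' := by
      have h1 : len G (bigP G l * Sg G j) ≤ n' := by
        rw [hlsj]
        calc len G (bigP G lr.dropLast) ≤ lr.dropLast.length := len_le G rfl
          _ = n' := hlen_dl
      have h2 := len_le_mul_S G l j
      omega
    have htj : j ≠ t := by
      intro h'
      rw [h'] at hlen_wsj
      omega
    -- the set of candidate minimal coset lengths
    set Pp : ℕ → Prop := fun r => ∃ mv md : List I, (∀ u ∈ md, u = t ∨ u = j) ∧
      bigP G l = bigP G mv * bigP G md ∧
      len G (bigP G l) = len G (bigP G mv) + md.length ∧ len G (bigP G mv) = r with hPp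
    have hPne : Pp n' := by
      refine ⟨lr.dropLast, [j], by simp, ?_, ?_, ?_⟩
      · rw [← hlsj, bigP_singleton, mul_assoc, Sg_invol, mul_one]
      · rw [hn, ← hlsj, hlen_wsj]
        simp
      · rw [← hlsj, hlen_wsj]
    have hne : {r | Pp r}.Nonempty := ⟨n', hPne⟩
    obtain ⟨mv, md, hmd_mem, hfact, hsum, hr⟩ := Nat.sInf_mem hne
    set r₀ := sInf {r | Pp r} with hr₀
    -- minimality: no descent at t or j
    have hmin : ∀ u : I, (u = t ∨ u = j) →
        len G (bigP G mv) ≤ len G (bigP G mv * Sg G u) := by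
      intro u hu
      by_contra hlt
      push_neg at hlt
      have hP' : Pp (len G (bigP G mv * Sg G u)) := by
        refine ⟨mv ++ [u], u :: md, ?_, ?_, ?_, ?_⟩
        · intro v hv
          rcases List.mem_cons.mp hv with rfl | hv'
          · exact hu
          · exact hmd_mem v hv'
        · rw [bigP_append, bigP_singleton, bigP_cons, hfact]
          rw [mul_assoc, ← mul_assoc (Sg G u), Sg_invol, one_mul]
        · have hub : len G (bigP G l) ≤ len G (bigP G (mv ++ [u])) + (u :: md).length := by
            have h1 : bigP G l = bigP G (mv ++ [u]) * bigP G (u :: md) := by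
              rw [bigP_append, bigP_singleton, bigP_cons, hfact]
              rw [mul_assoc, ← mul_assoc (Sg G u), Sg_invol, one_mul]
            calc len G (bigP G l) = len G (bigP G (mv ++ [u]) * bigP G (u :: md)) := by rw [← h1]
              _ ≤ len G (bigP G (mv ++ [u])) + (u :: md).length := len_mul_word_le G _ _
          have hlb : len G (bigP G (mv ++ [u])) + (u :: md).length ≤ len G (bigP G l) := by
            have h2 : len G (bigP G (mv ++ [u])) = len G (bigP G mv * Sg G u) := by
              rw [bigP_append, bigP_singleton]
            rw [h2]
            simp only [List.length_cons]
            omega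
          have h2 : len G (bigP G (mv ++ [u])) = len G (bigP G mv * Sg G u) := by
            rw [bigP_append, bigP_singleton]
          rw [h2] at hub hlb ⊢
          omega
        · rw [bigP_append, bigP_singleton]
      have := Nat.sInf_le (show len G (bigP G mv * Sg G u) ∈ {r | Pp r} from hP')
      omega
    -- IH applies to mv
    have hr_lt : len G (bigP G mv) < n' + 1 := by
      have : r₀ ≤ n' := Nat.sInf_le (show n' ∈ {r | Pp r} from hPne)
      omega
    have hpos_t : ∀ s', 0 ≤ cw G mv (ee t) s' :=
      IH (len G (bigP G mv)) hr_lt mv t rfl (hmin t (Or.inl rfl))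
    have hpos_j : ∀ s', 0 ≤ cw G mv (ee j) s' :=
      IH (len G (bigP G mv)) hr_lt mv j rfl (hmin j (Or.inr rfl))
    -- dihedral analysis of md
    rcases dihedral G t j (Ne.symm htj) md hmd_mem with ⟨p, q, hp, hq, hval⟩ | ⟨m', hm'len, hm'⟩
    · -- positive case
      have hl_eq : bigP G l = bigP G (mv ++ md) := by rw [bigP_append, hfact]
      have hcw : cw G l (ee t) = cw G mv (cw G md (ee t)) := by
        rw [bigP_eq_cw_eq G hl_eq, cw_append_apply]
      have hcomb : cw G md (ee t) = p • ee t + q • ee j := by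
        rw [hval]
        unfold ee
        rw [Finsupp.smul_single, Finsupp.smul_single, smul_eq_mul, smul_eq_mul,
          mul_one, mul_one]
      rw [hcw, hcomb, cw_add G mv, cw_smul G mv, cw_smul G mv]
      rw [Finsupp.add_apply, Finsupp.smul_apply, Finsupp.smul_apply, smul_eq_mul, smul_eq_mul]
      have := hpos_t s
      have := hpos_j s
      positivity
    · -- shortening case: contradiction with hle
      exfalso
      have hk : bigP G l * Sg G t = bigP G mv * bigP G m' := by
        rw [hfact, mul_assoc, ← hm']
      have hub : len G (bigP G l * Sg G t) ≤ len G (bigP G mv) + m'.length := by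
        rw [hk]; exact len_mul_word_le G _ _
      omega

theorem posQ (l : List I) (t : I)
    (hle : len G (bigP G l) ≤ len G (bigP G l * Sg G t)) :
    ∀ s, 0 ≤ cw G l (ee t) s :=
  posQ_aux G (len G (bigP G l)) l t rfl hle

lemma cref_ee_self (t : I) : cref G t (ee t) = - ee t := by
  rw [cref_apply]
  unfold ee
  rw [Ac_single, one_mul, G.a_diag, ← Finsupp.single_neg, ← Finsupp.single_sub]
  norm_num

theorem negQ (l : List I) (t : I)
    (hle : len G (bigP G l * Sg G t) ≤ len G (bigP G l)) :
    ∀ s, cw G l (ee t) s ≤ 0 := by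
  have h1 : bigP G (l ++ [t]) = bigP G l * Sg G t := by rw [bigP_append, bigP_singleton]
  have h2 : bigP G (l ++ [t]) * Sg G t = bigP G l := by
    rw [h1, mul_assoc, Sg_invol, mul_one]
  have h3 : len G (bigP G (l ++ [t])) ≤ len G (bigP G (l ++ [t]) * Sg G t) := by
    rw [h2, h1]; exact hle
  have h4 := posQ G (l ++ [t]) t h3
  intro s
  have h5 := h4 s
  rw [cw_append_apply, cw_singleton, cref_ee_self, cw_neg] at h5
  simp only [Finsupp.coe_neg, Pi.neg_apply] at h5
  omega

theorem len_mul_S_ne (l : List I) (t : I) :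
    len G (bigP G l * Sg G t) ≠ len G (bigP G l) := by
  intro h
  have h1 := posQ G l t h.ge
  have h2 := negQ G l t h.le
  have : cw G l (ee t) = 0 := by
    ext s
    have := h1 s
    have := h2 s
    simp only [Finsupp.coe_zero, Pi.zero_apply]
    omega
  exact cw_ee_ne_zero G l t this

theorem trich (l : List I) (t : I) :
    (len G (bigP G l * Sg G t) = len G (bigP G l) + 1 ∧ ∀ s, 0 ≤ cw G l (ee t) s)
    ∨ (len G (bigP G l * Sg G t) + 1 = len G (bigP G l) ∧ ∀ s, cw G l (ee t) s ≤ 0) := by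
  rcases lt_or_gt_of_ne (len_mul_S_ne G l t) with h | h
  · right
    have := len_le_mul_S G l t
    exact ⟨by omega, negQ G l t h.le⟩
  · left
    have := len_mul_S_le G l t
    exact ⟨by omega, posQ G l t h.le⟩

end S7

namespace S7
open Finsupp List

variable {I : Type} (G : KM.SGCM I)

lemma Pa_nonpos {μ : I → ℝ} {c : I →₀ ℤ} (hc : ∀ s, c s ≤ 0)
    (hμ : ∀ s, c s ≠ 0 → 0 ≤ μ s) : Pa μ c ≤ 0 := by
  apply Finset.sum_nonpos
  intro s hs
  have hcs : (c s : ℝ) ≤ 0 := by exact_mod_cast hc s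
  have hne : c s ≠ 0 := Finsupp.mem_support_iff.mp hs
  have hms := hμ s hne
  exact mul_nonpos_of_nonpos_of_nonneg hcs hms

theorem faithful (l : List I) (h : G.wordProd l = 1) : bigP G l = 1 := by
  by_contra hne
  have hn : len G (bigP G l) ≠ 0 := fun h0 => hne (len_zero_eq_one G l rfl h0)
  obtain ⟨lr, hlr, hlen⟩ := exists_min_word G l rfl
  have hlr_ne : lr ≠ [] := by
    intro h'
    rw [h', bigP_nil] at hlr
    exact hn (by rw [← hlr, len_one])
  set t := lr.getLast hlr_ne with ht
  have hdecomp : lr.dropLast ++ [t] = lr := List.dropLast_append_getLast hlr_ne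
  have hlsj : bigP G lr * Sg G t = bigP G lr.dropLast := by
    have hstep : bigP G lr = bigP G lr.dropLast * Sg G t := by
      conv_lhs => rw [← hdecomp]
      rw [bigP_append, bigP_singleton]
    rw [hstep, mul_assoc, Sg_invol, mul_one]
  have hlt : len G (bigP G lr * Sg G t) ≤ len G (bigP G lr) := by
    have h1 : len G (bigP G lr * Sg G t) ≤ lr.dropLast.length := by
      rw [hlsj]; exact len_le G rfl
    have h2 : lr.dropLast.length + 1 = lr.length := by
      conv_rhs => rw [← hdecomp]
      simp
    have h3 : len G (bigP G lr) = lr.length := by rw [hlr, ← hlen]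
    omega
  have hneg := negQ G lr t hlt
  have hP := Pa_invariant G lr (fun _ => (1:ℝ)) (ee t)
  have hwp : G.wordProd lr = 1 := by
    rw [bigP_eq_wp_eq G hlr, h]
  rw [hwp] at hP
  simp only [Equiv.Perm.one_apply] at hP
  have hval : Pa (fun _ => (1:ℝ)) (ee t) = 1 := by
    unfold ee
    rw [Pa_single]
    norm_num
  rw [hval] at hP
  have hle0 : Pa (fun _ => (1:ℝ)) (cw G lr (ee t)) ≤ 0 :=
    Pa_nonpos hneg (fun _ _ => by norm_num)
  rw [hP] at hle0
  norm_num at hle0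

theorem wp_eq_imp_bigP_eq {l m : List I} (h : G.wordProd l = G.wordProd m) :
    bigP G l = bigP G m := by
  have h1 : G.wordProd (l ++ m.reverse) = 1 := by
    rw [wp_append, wp_reverse, h]
    group
  have h2 := faithful G _ h1
  rw [bigP_append, bigP_reverse] at h2
  exact mul_inv_eq_one.mp h2

theorem length_transfer (l : List I) : G.length (G.wordProd l) = len G (bigP G l) := by
  unfold KM.SGCM.length len
  congr 1
  ext n
  simp only [Set.mem_setOf_eq]
  constructor
  · rintro ⟨m, hm1, hm2⟩
    exact ⟨m, hm1, wp_eq_imp_bigP_eq G hm2⟩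
  · rintro ⟨m, hm1, hm2⟩
    exact ⟨m, hm1, bigP_eq_wp_eq G hm2⟩

lemma cref_apply_other (t : I) (c : I →₀ ℤ) (u : I) (hu : u ≠ t) :
    cref G t c u = c u := by
  rw [cref_apply, Finsupp.sub_apply, Finsupp.single_eq_of_ne' (Ne.symm hu)]
  ring

theorem exchange (m : List I) (t : I)
    (h : len G (bigP G m * Sg G t) < len G (bigP G m)) :
    ∃ k, ∃ hk : k < m.length, bigP G m * Sg G t = bigP G (m.eraseIdx k) := by
  classical
  set dk : ℕ → (I →₀ ℤ) := fun k => cw G (m.drop k) (ee t) with hdk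
  have hd_end : ∀ s, 0 ≤ dk m.length s := by
    intro s
    rw [hdk]
    simp only [List.drop_length, cw_nil_apply]
    exact ee_nonneg t s
  have hd0 : ¬ (∀ s, 0 ≤ dk 0 s) := by
    intro hP
    have hneg : ∀ s, dk 0 s ≤ 0 := by
      intro s
      rw [hdk]
      simp only [List.drop_zero]
      exact negQ G m t h.le s
    have : dk 0 = 0 := by
      ext s
      have := hP s
      have := hneg s
      simp only [Finsupp.coe_zero, Pi.zero_apply]
      omega
    rw [hdk] at this
    simp only [List.drop_zero] at this
    exact cw_ee_ne_zero G m t this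
  have hex : ∃ k, ∀ s, 0 ≤ dk k s := ⟨m.length, hd_end⟩
  have hk'spec : ∀ s, 0 ≤ dk (Nat.find hex) s := Nat.find_spec hex
  have hk'0 : Nat.find hex ≠ 0 := by
    intro h0
    rw [h0] at hk'spec
    exact hd0 hk'spec
  have hk'le : Nat.find hex ≤ m.length := Nat.find_le hd_end
  obtain ⟨k, hkeq⟩ : ∃ k, Nat.find hex = k + 1 := ⟨Nat.find hex - 1, by omega⟩
  rw [hkeq] at hk'spec
  have hklt : k < m.length := by omega
  have hnotpos : ¬ (∀ s, 0 ≤ dk k s) := Nat.find_min hex (by omega)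
  have hdrop : m.drop k = m[k] :: m.drop (k+1) := List.drop_eq_getElem_cons hklt
  have hstep : dk k = cref G (m[k]) (dk (k+1)) := by
    rw [hdk]
    simp only
    rw [hdrop, cw_cons_apply]
  -- sign-definiteness of dk k : it must be ≤ 0
  have hneg : ∀ s, dk k s ≤ 0 := by
    rcases trich G (m.drop k) t with ⟨_, hpos⟩ | ⟨_, hneg⟩
    · exact absurd hpos hnotpos
    · exact hneg
  -- support of dk (k+1) is {m[k]}
  have hsupp : ∀ u, u ≠ m[k] → dk (k+1) u = 0 := by
    intro u hu
    have h1 : dk k u = dk (k+1) u := by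
      rw [hstep]
      exact cref_apply_other G (m[k]) (dk (k+1)) u hu
    have := hneg u
    have := hk'spec u
    omega
  set p := dk (k+1) (m[k]) with hpdef
  have heq : dk (k+1) = Finsupp.single (m[k]) p := by
    ext u
    rcases eq_or_ne u (m[k]) with rfl | hu
    · rw [Finsupp.single_eq_same]
    · rw [hsupp u hu, Finsupp.single_eq_of_ne' (Ne.symm hu)]
  have hp1 : 1 ≤ p := by
    have hp0 : 0 ≤ p := hk'spec _
    rcases eq_or_lt_of_le hp0 with h0 | h0
    · exfalso
      apply cw_ee_ne_zero G (m.drop (k+1)) t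
      rw [show cw G (m.drop (k+1)) (ee t) = dk (k+1) from rfl, heq, ← h0]
      simp
    · omega
  -- primitivity
  have hprim : p = 1 := by
    have h1 : ee t = cw G (m.drop (k+1)).reverse (Finsupp.single (m[k]) p) := by
      rw [← heq, hdk]
      simp only
      rw [cw_reverse, Equiv.Perm.inv_apply_self]
    rw [cw_single] at h1
    have h2 := congrArg (fun c : I →₀ ℤ => c t) h1
    simp only [Finsupp.smul_apply, smul_eq_mul] at h2
    rw [show (ee t) t = 1 by unfold ee; rw [Finsupp.single_eq_same]] at h2
    set z := cw G (m.drop (k+1)).reverse (ee (m[k])) t with hz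
    have hz1 : 1 ≤ z := by nlinarith
    nlinarith
  have hcw : cw G (m.drop (k+1)) (ee t) = ee (m[k]) := by
    rw [show cw G (m.drop (k+1)) (ee t) = dk (k+1) from rfl, heq, hprim]
    rfl
  have hcj := conj_lemma G (m.drop (k+1)) t (m[k]) hcw
  have key : Sg G (m[k]) * bigP G (m.drop (k+1)) * Sg G t = bigP G (m.drop (k+1)) := by
    have hkey2 : bigP G (m.drop (k+1)) * Sg G t = Sg G (m[k]) * bigP G (m.drop (k+1)) := by
      calc bigP G (m.drop (k+1)) * Sg G t
          = (bigP G (m.drop (k+1)) * Sg G t * (bigP G (m.drop (k+1)))⁻¹)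
            * bigP G (m.drop (k+1)) := by group
        _ = Sg G (m[k]) * bigP G (m.drop (k+1)) := by rw [hcj]
    rw [mul_assoc, hkey2, ← mul_assoc, Sg_invol, one_mul]
  have hm : m = m.take k ++ m[k] :: m.drop (k+1) := by
    conv_lhs => rw [← List.take_append_drop k m]
    rw [hdrop]
  refine ⟨k, hklt, ?_⟩
  rw [List.eraseIdx_eq_take_drop_succ]
  calc bigP G m * Sg G t
      = bigP G (m.take k) * (Sg G (m[k]) * bigP G (m.drop (k+1))) * Sg G t := by
        conv_lhs => rw [hm]
        rw [bigP_append, bigP_cons]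
    _ = bigP G (m.take k) * (Sg G (m[k]) * bigP G (m.drop (k+1)) * Sg G t) := by
        rw [mul_assoc]
    _ = bigP G (m.take k) * bigP G (m.drop (k+1)) := by rw [key]
    _ = bigP G (m.take k ++ m.drop (k+1)) := (bigP_append G _ _).symm

theorem deletion (m : List I) (h : len G (bigP G m) ≠ m.length) :
    ∃ m' : List I, m'.length + 2 = m.length ∧ (∀ u ∈ m', u ∈ m) ∧ bigP G m' = bigP G m := by
  have hle : len G (bigP G m) ≤ m.length := len_le G rfl
  have hlt : len G (bigP G m) < m.length := by omega
  have hex : ∃ k, k < m.length ∧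
      len G (bigP G (m.take (k+1))) ≤ len G (bigP G (m.take k)) := by
    by_contra hc
    push_neg at hc
    have grow : ∀ k, k ≤ m.length → k ≤ len G (bigP G (m.take k)) := by
      intro k
      induction k with
      | zero => intro _; omega
      | succ k ih =>
        intro hk
        have h1 := hc k (by omega)
        have h2 := ih (by omega)
        omega
    have := grow m.length (le_refl _)
    rw [List.take_length] at this
    omega
  obtain ⟨k, hk, hdesc⟩ := hex
  have htake : m.take (k+1) = m.take k ++ [m[k]] := by
    rw [List.take_succ]
    congr 1
    rw [List.getElem?_eq_getElem hk]
    rfl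
  have hsplit : bigP G (m.take (k+1)) = bigP G (m.take k) * Sg G (m[k]) := by
    rw [htake, bigP_append, bigP_singleton]
  have hdesc2 : len G (bigP G (m.take k) * Sg G (m[k])) < len G (bigP G (m.take k)) := by
    rcases lt_or_eq_of_le hdesc with h1 | h1
    · rw [← hsplit]; exact h1
    · exfalso
      apply len_mul_S_ne G (m.take k) (m[k])
      rw [← hsplit]
      exact h1
  obtain ⟨s, hs, hex2⟩ := exchange G (m.take k) (m[k]) hdesc2
  have hslt : s < k := by
    have := List.length_take (i := k) (l := m)
    rw [List.length_take] at hs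
    omega
  refine ⟨(m.take k).eraseIdx s ++ m.drop (k+1), ?_, ?_, ?_⟩
  · rw [List.length_append, List.length_eraseIdx]
    rw [List.length_take] at hs ⊢
    simp only [hs, if_pos]
    rw [List.length_drop]
    omega
  · intro u hu
    rcases List.mem_append.mp hu with hu | hu
    · exact List.Sublist.mem (List.Sublist.mem hu (List.eraseIdx_sublist _ s)) (List.take_sublist k m)
    · exact List.Sublist.mem hu (List.drop_sublist (k+1) m)
  · have hm : m = m.take (k+1) ++ m.drop (k+1) := (List.take_append_drop (k+1) m).symm
    rw [bigP_append, hex2.symm, ← hsplit]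
    conv_rhs => rw [hm]
    rw [bigP_append]

end S7

namespace S7
open Finsupp List

variable {I : Type} (G : KM.SGCM I)

lemma Pa_neg (μ : I → ℝ) (c : I →₀ ℤ) : Pa μ (-c) = - Pa μ c := by
  have h := Pa_smul μ (-1) c
  simpa using h

lemma Pa_ee (μ : I → ℝ) (t : I) : Pa μ (ee t) = μ t := by
  unfold ee
  rw [Pa_single]
  push_cast
  ring

lemma len_reverse (l : List I) : len G (bigP G l.reverse) = len G (bigP G l) := by
  apply _root_.le_antisymm
  · obtain ⟨m, hm, hlen⟩ := exists_min_word G l rfl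
    have h1 : bigP G m.reverse = bigP G l.reverse := by
      rw [bigP_reverse, bigP_reverse, hm]
    calc len G (bigP G l.reverse) ≤ m.reverse.length := len_le G h1
      _ = len G (bigP G l) := by rw [List.length_reverse, hlen]
  · obtain ⟨m, hm, hlen⟩ := exists_min_word G l.reverse rfl
    have h1 : bigP G m.reverse = bigP G l := by
      rw [bigP_reverse, hm, ← bigP_reverse, List.reverse_reverse]
    calc len G (bigP G l) ≤ m.reverse.length := len_le G h1
      _ = len G (bigP G l.reverse) := by rw [List.length_reverse, hlen]

lemma len_word_mul_le (a b : List I) :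
    len G (bigP G (a ++ b)) ≤ a.length + len G (bigP G b) := by
  obtain ⟨m, hm, hlen⟩ := exists_min_word G b rfl
  have h1 : bigP G (a ++ m) = bigP G (a ++ b) := by
    rw [bigP_append, bigP_append, hm]
  calc len G (bigP G (a ++ b)) ≤ (a ++ m).length := len_le G h1
    _ = a.length + len G (bigP G b) := by rw [List.length_append, hlen]

lemma len_take_drop (l : List I) (hred : len G (bigP G l) = l.length) (k : ℕ)
    (hk : k ≤ l.length) :
    len G (bigP G (l.take k)) = k ∧ len G (bigP G (l.drop k)) = l.length - k := by
  have hsplit : bigP G l = bigP G (l.take k) * bigP G (l.drop k) := by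
    rw [← bigP_append, List.take_append_drop]
  have h1 : len G (bigP G (l.take k)) ≤ k := by
    calc len G (bigP G (l.take k)) ≤ (l.take k).length := len_le G rfl
      _ = k := by rw [List.length_take]; omega
  have h2 : len G (bigP G (l.drop k)) ≤ l.length - k := by
    calc len G (bigP G (l.drop k)) ≤ (l.drop k).length := len_le G rfl
      _ = l.length - k := by rw [List.length_drop]
  have h3 : l.length ≤ len G (bigP G (l.take k)) + (l.drop k).length := by
    calc l.length = len G (bigP G l) := hred.symm
      _ = len G (bigP G (l.take k) * bigP G (l.drop k)) := by rw [← hsplit]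
      _ ≤ len G (bigP G (l.take k)) + (l.drop k).length := len_mul_word_le G _ _
  have h4 : l.length ≤ (l.take k).length + len G (bigP G (l.drop k)) := by
    calc l.length = len G (bigP G l) := hred.symm
      _ = len G (bigP G (l.take k ++ l.drop k)) := by rw [List.take_append_drop]
      _ ≤ (l.take k).length + len G (bigP G (l.drop k)) := len_word_mul_le G _ _
  rw [List.length_drop] at h3
  rw [List.length_take] at h4
  omega

lemma cw_not_mem (l : List I) (c : I →₀ ℤ) (s : I) (hs : s ∉ l) : cw G l c s = c s := by
  induction l with
  | nil => rw [cw_nil_apply]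
  | cons t l ih =>
    have hst : s ≠ t := fun h => hs (h ▸ List.mem_cons_self (a := t) (l := l))
    have hsl : s ∉ l := fun h => hs (List.mem_cons_of_mem t h)
    rw [cw_cons_apply, cref_apply_other G t _ s hst, ih hsl]

lemma wordProd_mem_closure (S : Set (Equiv.Perm (I → ℝ))) (l : List I)
    (h : ∀ t ∈ l, G.srefl t ∈ S) : G.wordProd l ∈ Subgroup.closure S := by
  induction l with
  | nil => rw [wp_nil]; exact one_mem _
  | cons t l ih =>
    rw [wp_cons]
    exact mul_mem (Subgroup.subset_closure (h t (List.mem_cons_self (a := t) (l := l))))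
      (ih fun u hu => h u (List.mem_cons_of_mem t hu))

lemma take_succ_eq (l : List I) (k : ℕ) (hk : k < l.length) :
    l.take (k+1) = l.take k ++ [l[k]] := by
  rw [List.take_succ]
  congr 1
  rw [List.getElem?_eq_getElem hk]
  rfl

lemma descent_walk (a b : List I) (t : I)
    (hpos : ∀ s, 0 ≤ cw G b (ee t) s)
    (hneg : ∀ s, cw G (a ++ b) (ee t) s ≤ 0) :
    ∃ r, ∃ hr : r < a.length, cw G (a.drop (r+1) ++ b) (ee t) = ee (a[r]) := by
  classical
  set dk : ℕ → (I →₀ ℤ) := fun r => cw G (a.drop r ++ b) (ee t) with hdk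
  have hd_end : ∀ s, 0 ≤ dk a.length s := by
    intro s
    rw [hdk]
    simp only [List.drop_length, List.nil_append]
    exact hpos s
  have hd0 : ¬ (∀ s, 0 ≤ dk 0 s) := by
    intro hP
    have hneg0 : ∀ s, dk 0 s ≤ 0 := by
      intro s
      rw [hdk]
      simp only [List.drop_zero]
      exact hneg s
    have hzero : dk 0 = 0 := by
      ext s
      have := hP s
      have := hneg0 s
      simp only [Finsupp.coe_zero, Pi.zero_apply]
      omega
    rw [hdk] at hzero
    simp only [List.drop_zero] at hzero
    exact cw_ee_ne_zero G (a ++ b) t hzero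
  have hex : ∃ r, ∀ s, 0 ≤ dk r s := ⟨a.length, hd_end⟩
  have hspec : ∀ s, 0 ≤ dk (Nat.find hex) s := Nat.find_spec hex
  have h0 : Nat.find hex ≠ 0 := by
    intro h0
    rw [h0] at hspec
    exact hd0 hspec
  have hle : Nat.find hex ≤ a.length := Nat.find_le hd_end
  obtain ⟨r, hreq⟩ : ∃ r, Nat.find hex = r + 1 := ⟨Nat.find hex - 1, by omega⟩
  rw [hreq] at hspec
  have hrlt : r < a.length := by omega
  have hnotpos : ¬ (∀ s, 0 ≤ dk r s) := Nat.find_min hex (by omega)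
  have hdropr : a.drop r = a[r] :: a.drop (r+1) := List.drop_eq_getElem_cons hrlt
  have hstep : dk r = cref G (a[r]) (dk (r+1)) := by
    rw [hdk]
    simp only
    rw [hdropr, List.cons_append, cw_cons_apply]
  have hnegr : ∀ s, dk r s ≤ 0 := by
    rcases trich G (a.drop r ++ b) t with ⟨_, hp⟩ | ⟨_, hn⟩
    · exact absurd hp hnotpos
    · exact hn
  have hsupp : ∀ u, u ≠ a[r] → dk (r+1) u = 0 := by
    intro u hu
    have h1 : dk r u = dk (r+1) u := by
      rw [hstep]
      exact cref_apply_other G (a[r]) (dk (r+1)) u hu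
    have := hnegr u
    have := hspec u
    omega
  have heq : dk (r+1) = Finsupp.single (a[r]) (dk (r+1) (a[r])) := by
    ext u
    rcases eq_or_ne u (a[r]) with rfl | hu
    · rw [Finsupp.single_eq_same]
    · rw [hsupp u hu, Finsupp.single_eq_of_ne' (Ne.symm hu)]
  set p := dk (r+1) (a[r]) with hpdef
  have hp1 : 1 ≤ p := by
    have hp0 : 0 ≤ p := hspec _
    rcases eq_or_lt_of_le hp0 with h0' | h0'
    · exfalso
      apply cw_ee_ne_zero G (a.drop (r+1) ++ b) t
      rw [show cw G (a.drop (r+1) ++ b) (ee t) = dk (r+1) from rfl, heq, ← h0']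
      simp
    · omega
  have hprim : p = 1 := by
    have h1 : ee t = cw G (a.drop (r+1) ++ b).reverse (Finsupp.single (a[r]) p) := by
      rw [← heq, hdk]
      simp only
      rw [cw_reverse, Equiv.Perm.inv_apply_self]
    rw [cw_single] at h1
    have h2 := congrArg (fun c : I →₀ ℤ => c t) h1
    simp only [Finsupp.smul_apply, smul_eq_mul] at h2
    rw [show (ee t) t = 1 by unfold ee; rw [Finsupp.single_eq_same]] at h2
    set z := cw G (a.drop (r+1) ++ b).reverse (ee (a[r])) t with hz
    have hz1 : 1 ≤ z := by nlinarith
    nlinarith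
  refine ⟨r, hrlt, ?_⟩
  rw [show cw G (a.drop (r+1) ++ b) (ee t) = dk (r+1) from rfl, heq, hprim]
  rfl

end S7


/-- Let `Λ` be dominant, `x` a `Λ`-(co)minuscule element,
`S(x) = {α : ⟨x(Λ), α^∨⟩ ≥ 0}`, `W_x` the subgroup generated by `{s_α : α ∈ S(x)}`, and
let `w ∈ W_x` be of minimal length in its coset modulo the stabilizer of `x(Λ)` in
`W_x`. Then lengths are additive: `ℓ(w x) = ℓ(w) + ℓ(x)`. -/
theorem statement7 {I : Type} (G : KM.SGCM I) (Λ : I → ℝ) (hdom : ∀ i, 0 ≤ Λ i)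
    (x : Equiv.Perm (I → ℝ)) (hx : G.IsCoMin Λ x)
    (w : Equiv.Perm (I → ℝ))
    (hwWx : w ∈ Subgroup.closure
      {p : Equiv.Perm (I → ℝ) | ∃ α, 0 ≤ x Λ α ∧ p = G.srefl α})
    (hmin : ∀ q ∈ Subgroup.closure
        {p : Equiv.Perm (I → ℝ) | ∃ α, 0 ≤ x Λ α ∧ p = G.srefl α},
      q (x Λ) = x Λ → G.length w ≤ G.length (w * q)) :
    G.length (w * x) = G.length w + G.length x := by
  classical
  open S7 List in
  -- a reduced word for x
  obtain ⟨lx, hlxred, hlxprod⟩ : ∃ lx : List I, G.IsReduced lx ∧ G.wordProd lx = x := by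
    rcases hx with ⟨l, h1, h2, _⟩ | ⟨l, h1, h2, _⟩ <;> exact ⟨l, h1, h2⟩
  have hlenx : len G (bigP G lx) = lx.length := by
    rw [← length_transfer]; exact hlxred
  -- a word for w in the letters of S(x)
  have hw0 : ∀ v, v ∈ Subgroup.closure
      {p : Equiv.Perm (I → ℝ) | ∃ α, 0 ≤ x Λ α ∧ p = G.srefl α} →
      ∃ l0 : List I, (∀ t ∈ l0, 0 ≤ x Λ t) ∧ G.wordProd l0 = v := by
    intro v hv
    induction hv using Subgroup.closure_induction with
    | mem g hg =>
      obtain ⟨α, hα, rfl⟩ := hg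
      exact ⟨[α], by simpa using hα, by simp⟩
    | one => exact ⟨[], by simp, by simp⟩
    | mul g h _ _ ihg ihh =>
      obtain ⟨lg, hg1, hg2⟩ := ihg
      obtain ⟨lh, hh1, hh2⟩ := ihh
      refine ⟨lg ++ lh, ?_, by rw [wp_append, hg2, hh2]⟩
      intro t ht
      rcases List.mem_append.mp ht with h' | h'
      · exact hg1 t h'
      · exact hh1 t h'
    | inv g _ ihg =>
      obtain ⟨lg, h1, h2⟩ := ihg
      exact ⟨lg.reverse, fun t ht => h1 t (List.mem_reverse.mp ht), by rw [wp_reverse, h2]⟩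
  obtain ⟨l0, hl0mem, hl0prod⟩ := hw0 w hwWx
  -- a minimal-length S(x)-word for w
  have hPSex : ∃ nn : ℕ, ∃ l : List I, l.length = nn ∧ (∀ t ∈ l, 0 ≤ x Λ t) ∧
      G.wordProd l = w := ⟨l0.length, l0, rfl, hl0mem, hl0prod⟩
  obtain ⟨lw, hlw_len, hlw_mem, hlw_prod⟩ := Nat.find_spec hPSex
  have hlw_red : len G (bigP G lw) = lw.length := by
    by_contra hne
    obtain ⟨m', hm'len, hm'mem, hm'eq⟩ := deletion G lw hne
    exact Nat.find_min hPSex (show m'.length < Nat.find hPSex by omega)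
      ⟨m', rfl, fun t ht => hlw_mem t (hm'mem t ht),
        by rw [bigP_eq_wp_eq G hm'eq, hlw_prod]⟩
  have hLw : G.length w = lw.length := by
    rw [← hlw_prod, length_transfer, hlw_red]
  have hLx : G.length x = lx.length := by
    rw [← hlxprod]; exact hlxred
  -- main induction on prefixes of lx
  have main : ∀ k, k ≤ lx.length → len G (bigP G (lw ++ lx.take k)) = lw.length + k := by
    intro k
    induction k with
    | zero => intro _; simpa using hlw_red
    | succ k ih =>
      intro hk1
      have hk : k < lx.length := by omega
      have ihv := ih (by omega)
      have htake : lx.take (k+1) = lx.take k ++ [lx[k]] := take_succ_eq lx k hk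
      have hsplit : bigP G (lw ++ lx.take (k+1)) = bigP G (lw ++ lx.take k) * Sg G (lx[k]) := by
        rw [htake, ← List.append_assoc, bigP_append, bigP_singleton]
      rcases trich G (lw ++ lx.take k) (lx[k]) with ⟨hlen1, _⟩ | ⟨_, hCneg⟩
      · rw [hsplit, hlen1, ihv]
        omega
      · exfalso
        -- the coroot c is positive
        have hcpos : ∀ s, 0 ≤ cw G (lx.take k) (ee (lx[k])) s := by
          apply posQ G (lx.take k) (lx[k])
          have h1 : bigP G (lx.take k) * Sg G (lx[k]) = bigP G (lx.take (k+1)) := by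
            rw [htake, bigP_append, bigP_singleton]
          rw [h1, (len_take_drop G lx hlenx k (by omega)).1,
            (len_take_drop G lx hlenx (k+1) (by omega)).1]
          omega
        -- the pairing of x Λ with c is nonnegative
        have hP1 : 0 ≤ Pa (x Λ) (cw G (lx.take k) (ee (lx[k]))) := by
          apply Pa_nonneg hcpos
          intro s hcs
          by_contra hneg2
          push_neg at hneg2
          have hs_not : s ∉ lw := fun hmem => absurd (hlw_mem s hmem) (by linarith)
          have h1 : cw G lw (cw G (lx.take k) (ee (lx[k]))) s
              = cw G (lx.take k) (ee (lx[k])) s :=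
            cw_not_mem G lw _ s hs_not
          have h2 := hCneg s
          rw [cw_append_apply] at h2
          have h3 := hcpos s
          omega
        -- the pairing is nonpositive
        have hP2 : Pa (x Λ) (cw G (lx.take k) (ee (lx[k]))) ≤ 0 := by
          have hrev : cw G lx.reverse (cw G (lx.take k) (ee (lx[k])))
              = - cw G (lx.drop (k+1)).reverse (ee (lx[k])) := by
            have e1 : cw G lx.reverse (cw G (lx.take k) (ee (lx[k])))
                = cw G (lx.reverse ++ lx.take k) (ee (lx[k])) := by
              rw [cw_append_apply]
            have e2 : bigP G (lx.reverse ++ lx.take k) = bigP G (lx.drop k).reverse := by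
              rw [bigP_append, bigP_reverse, bigP_reverse]
              have h5 : bigP G lx = bigP G (lx.take k) * bigP G (lx.drop k) := by
                rw [← bigP_append, List.take_append_drop]
              rw [h5, mul_inv_rev]
              group
            have e3 : (lx.drop k).reverse = (lx.drop (k+1)).reverse ++ [lx[k]] := by
              rw [List.drop_eq_getElem_cons hk]
              simp
            rw [e1, bigP_eq_cw_eq G e2, e3, cw_append_apply, cw_singleton, cref_ee_self,
              cw_neg]
          have hdpos : ∀ s, 0 ≤ cw G (lx.drop (k+1)).reverse (ee (lx[k])) s := by
            apply posQ
            have h1 : bigP G (lx.drop (k+1)).reverse * Sg G (lx[k])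
                = bigP G (lx.drop k).reverse := by
              have e3 : (lx.drop k).reverse = (lx.drop (k+1)).reverse ++ [lx[k]] := by
                rw [List.drop_eq_getElem_cons hk]
                simp
              rw [e3, bigP_append, bigP_singleton]
            rw [h1, len_reverse, len_reverse, (len_take_drop G lx hlenx (k+1) (by omega)).2,
              (len_take_drop G lx hlenx k (by omega)).2]
            omega
          have hinv : Pa (x Λ) (cw G (lx.take k) (ee (lx[k])))
              = Pa Λ (cw G lx.reverse (cw G (lx.take k) (ee (lx[k])))) := by
            have hPi := Pa_invariant G lx Λ (cw G lx.reverse (cw G (lx.take k) (ee (lx[k]))))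
            have hcc : cw G lx (cw G lx.reverse (cw G (lx.take k) (ee (lx[k]))))
                = cw G (lx.take k) (ee (lx[k])) := by
              rw [cw_reverse, Equiv.Perm.apply_inv_self]
            rw [hcc, hlxprod] at hPi
            exact hPi
          rw [hinv, hrev, Pa_neg]
          have := Pa_nonneg hdpos (fun s _ => hdom s)
          linarith
        have hPa0 : Pa (x Λ) (cw G (lx.take k) (ee (lx[k]))) = 0 :=
          le_antisymm hP2 hP1
        -- descent walk along lw
        have hCneg2 : ∀ s, cw G (lw ++ lx.take k) (ee (lx[k])) s ≤ 0 := hCneg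
        obtain ⟨r, hr, hcw2⟩ := descent_walk G lw (lx.take k) (lx[k]) hcpos hCneg2
        have hconj := conj_lemma G (lw.drop (r+1) ++ lx.take k) (lx[k]) (lw[r]) hcw2
        have huy : bigP G (lw.drop (r+1) ++ lx.take k)
            = bigP G (lw.drop (r+1)) * bigP G (lx.take k) := bigP_append G _ _
        have hyconj : bigP G (lx.take k) * Sg G (lx[k]) * (bigP G (lx.take k))⁻¹
            = (bigP G (lw.drop (r+1)))⁻¹ * Sg G (lw[r]) * bigP G (lw.drop (r+1)) := by
          rw [← hconj, huy]
          group
        have hq1 : bigP G (lx.take k ++ lx[k] :: (lx.take k).reverse)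
            = bigP G (lx.take k) * Sg G (lx[k]) * (bigP G (lx.take k))⁻¹ := by
          rw [bigP_append, bigP_cons, bigP_reverse, mul_assoc]
        have hq2 : bigP G ((lw.drop (r+1)).reverse ++ lw[r] :: lw.drop (r+1))
            = (bigP G (lw.drop (r+1)))⁻¹ * Sg G (lw[r]) * bigP G (lw.drop (r+1)) := by
          rw [bigP_append, bigP_cons, bigP_reverse, mul_assoc]
        have hqq : bigP G (lx.take k ++ lx[k] :: (lx.take k).reverse)
            = bigP G ((lw.drop (r+1)).reverse ++ lw[r] :: lw.drop (r+1)) := by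
          rw [hq1, hq2, hyconj]
        -- the reflection q
        set q := G.wordProd (lx.take k ++ lx[k] :: (lx.take k).reverse) with hqdef
        have hq_mem : q ∈ Subgroup.closure
            {p : Equiv.Perm (I → ℝ) | ∃ α, 0 ≤ x Λ α ∧ p = G.srefl α} := by
          rw [hqdef, bigP_eq_wp_eq G hqq]
          apply wordProd_mem_closure
          intro u hu
          have humem : u ∈ lw := by
            rcases List.mem_append.mp hu with h1 | h1
            · exact List.Sublist.mem (List.mem_reverse.mp h1) (List.drop_sublist _ _)
            · rcases List.mem_cons.mp h1 with rfl | h1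
              · exact List.getElem_mem hr
              · exact List.Sublist.mem h1 (List.drop_sublist _ _)
          exact ⟨u, hlw_mem u humem, rfl⟩
        have hq_fix : q (x Λ) = x Λ := by
          rw [hqdef]
          have happ : G.wordProd (lx.take k ++ lx[k] :: (lx.take k).reverse) (x Λ)
              = G.wordProd (lx.take k)
                  (G.srefl (lx[k]) (G.wordProd (lx.take k).reverse (x Λ))) := by
            rw [wp_append, wp_cons, Equiv.Perm.mul_apply, Equiv.Perm.mul_apply]
          have hξj : G.wordProd (lx.take k).reverse (x Λ) (lx[k]) = 0 := by
            have h1 := Pa_ee (G.wordProd (lx.take k).reverse (x Λ)) (lx[k])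
            have h2 := Pa_invariant G (lx.take k)
              (G.wordProd (lx.take k).reverse (x Λ)) (ee (lx[k]))
            have h3 : G.wordProd (lx.take k) (G.wordProd (lx.take k).reverse (x Λ)) = x Λ := by
              rw [wp_reverse, Equiv.Perm.apply_inv_self]
            rw [h3] at h2
            rw [← h1, ← h2, hPa0]
          have hfix2 : G.srefl (lx[k]) (G.wordProd (lx.take k).reverse (x Λ))
              = G.wordProd (lx.take k).reverse (x Λ) := by
            funext s
            rw [srefl_apply, hξj]
            ring
          rw [happ, hfix2, wp_reverse, Equiv.Perm.apply_inv_self]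
        -- length of w * q drops
        have hlw_decomp : lw = lw.take r ++ lw[r] :: lw.drop (r+1) := by
          conv_lhs => rw [← List.take_append_drop r lw]
          rw [List.drop_eq_getElem_cons hr]
        have hwq : w * q = G.wordProd (lw ++ ((lw.drop (r+1)).reverse ++ lw[r] :: lw.drop (r+1))) := by
          rw [wp_append, hlw_prod, hqdef, bigP_eq_wp_eq G hqq]
        have hbig : bigP G (lw ++ ((lw.drop (r+1)).reverse ++ lw[r] :: lw.drop (r+1)))
            = bigP G (lw.take r ++ lw.drop (r+1)) := by
          rw [bigP_append, hq2, bigP_append]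
          have hlwsplit : bigP G lw = bigP G (lw.take r) * (Sg G (lw[r]) * bigP G (lw.drop (r+1))) := by
            conv_lhs => rw [hlw_decomp]
            rw [bigP_append, bigP_cons]
          rw [hlwsplit]
          have hgr : (bigP G (lw.take r) * (Sg G (lw[r]) * bigP G (lw.drop (r+1))))
              * ((bigP G (lw.drop (r+1)))⁻¹ * Sg G (lw[r]) * bigP G (lw.drop (r+1)))
              = bigP G (lw.take r) * (Sg G (lw[r]) * Sg G (lw[r])) * bigP G (lw.drop (r+1)) := by
            group
          rw [hgr, Sg_invol, mul_one]
        have hlen_wq : G.length (w * q) ≤ lw.length - 1 := by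
          rw [hwq, length_transfer, hbig]
          calc len G (bigP G (lw.take r ++ lw.drop (r+1)))
              ≤ (lw.take r ++ lw.drop (r+1)).length := len_le G rfl
            _ = lw.length - 1 := by
                rw [List.length_append, List.length_take, List.length_drop]
                omega
        have hminq := hmin q hq_mem hq_fix
        rw [hLw] at hminq
        omega
  have hfin := main lx.length (le_refl _)
  rw [List.take_length] at hfin
  have hwx : w * x = G.wordProd (lw ++ lx) := by
    rw [wp_append, hlw_prod, hlxprod]
  rw [hwx, length_transfer, hfin, hLw, hLx]
end
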